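/- arXiv:2112.15030 — 4 statements merged into one kernel-verified Lean document; each statement's English description precedes it below -/
import Mathlib

section
/- Let A and B be real p × n matrices, and let F^{S_A} and F^{S_B} denote the cumulative distribution functions of the empirical spectral distributions of AAᵀ and BBᵀ respectively. Then the Lévy distance L between them satisfies L(F^{S_A}, F^{S_B})⁴ ≤ (2/p²) · Tr(AAᵀ + BBᵀ) · Tr((A − B)(A − B)ᵀ). -/
open MeasureTheory ProbabilityTheory Filter Topology Matrix
open scoped ENNReal NNReal BigOperators Classical

noncomputable section

/-- The empirical spectral distribution of a Hermitian (real symmetric) matrix. -/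
def esd {m : ℕ} (A : Matrix (Fin m) (Fin m) ℝ) (hA : A.IsHermitian) : Measure ℝ :=
  ((m : ℝ≥0∞))⁻¹ • ∑ i : Fin m, Measure.dirac (hA.eigenvalues i)

lemma gram_isHermitian {p n : ℕ} (Z : Matrix (Fin p) (Fin n) ℝ) : (Z * Zᵀ).IsHermitian := by
  have h := Matrix.isHermitian_mul_conjTranspose_self Z
  rwa [Matrix.conjTranspose_eq_transpose_of_trivial] at h

/-- ESD of the Gram matrix `Z Zᵀ`. -/
def esdGram {p n : ℕ} (Z : Matrix (Fin p) (Fin n) ℝ) : Measure ℝ :=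
  esd (Z * Zᵀ) (gram_isHermitian Z)

/-- Weak convergence of a sequence of measures on ℝ. -/
def WeakLim (μs : ℕ → Measure ℝ) (μ : Measure ℝ) : Prop :=
  ∀ f : BoundedContinuousFunction ℝ ℝ,
    Tendsto (fun n => ∫ v, f v ∂(μs n)) atTop (𝓝 (∫ v, f v ∂μ))

/-- Truncation `x 1{|x| ≤ t}` at a (possibly infinite) level `t`. -/
def trunc (t : ℝ≥0∞) (v : ℝ) : ℝ := if ENNReal.ofReal |v| ≤ t then v else 0

/-- `P` is a partition of `{1, …, m}`. -/
def IsPart (m : ℕ) (P : Finset (Finset ℕ)) : Prop :=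
  (∀ B ∈ P, B.Nonempty) ∧ (∀ B ∈ P, B ⊆ Finset.Icc 1 m) ∧
    (∀ B ∈ P, ∀ C ∈ P, B ≠ C → Disjoint B C) ∧
    (∀ x ∈ Finset.Icc 1 m, ∃ B ∈ P, x ∈ B)

/-- All partitions of `{1, …, m}`. -/
def partitionsOf (m : ℕ) : Finset (Finset (Finset ℕ)) :=
  ((Finset.Icc 1 m).powerset.powerset).filter (IsPart m)

/-- Least element of a finite set of naturals (`0` for the empty set). -/
def minOf (B : Finset ℕ) : ℕ := WithTop.untopD 0 B.min

/-- Every maximal run of consecutive integers in `B` has even length,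
i.e. `B` is a union of sets of even sizes of consecutive integers. -/
def EvenRuns (B : Finset ℕ) : Prop :=
  ∀ a b : ℕ, a ≤ b → (∀ x, a ≤ x → x ≤ b → x ∈ B) → (a - 1) ∉ B → (b + 1) ∉ B →
    Even (b + 1 - a)

/-- A special symmetric partition of `{1, …, 2k}`. -/
def SpecialSymmetric (k : ℕ) (P : Finset (Finset ℕ)) : Prop :=
  IsPart (2 * k) P ∧
  (∀ B ∈ P, (∀ C ∈ P, C.min ≤ B.min) → EvenRuns B) ∧
  (∀ V ∈ P, ∀ W ∈ P, V ≠ W → ∀ u ∈ V, ∀ v ∈ V, u < v → (∀ x ∈ V, ¬(u < x ∧ x < v)) →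
    (W.filter (fun w => u < w ∧ w < v ∧ Odd w)).card
      = (W.filter (fun w => u < w ∧ w < v ∧ Even w)).card)

/-- The special symmetric partitions of `{1,…,2k}` (as a finite set). -/
def SSpart (k : ℕ) : Finset (Finset (Finset ℕ)) :=
  (partitionsOf (2 * k)).filter (SpecialSymmetric k)

/-- The special symmetric partitions of `{1,…,2k}` with exactly `b` blocks. -/
def SSb (k b : ℕ) : Finset (Finset (Finset ℕ)) :=
  (SSpart k).filter (fun P => P.card = b)

/-- Number `r` of blocks with even least element ("`r+1` even generating vertices"). -/
def evenGenCount (P : Finset (Finset ℕ)) : ℕ :=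
  (P.filter (fun B => Even (minOf B))).card

/-- Extend a map on `{0,…,2k}` (coded as `Fin (2k+1)`) to all of ℕ. -/
def ext' {m : ℕ} (π : Fin (m + 1) → ℕ) (i : ℕ) : ℕ :=
  if h : i < m + 1 then π ⟨i, h⟩ else 0

/-- The set of S-circuits of length `2k` matching a partition `σ` of `{1,…,2k}`. -/
def PiS (p n k : ℕ) (σ : Finset (Finset ℕ)) : Set (Fin (2 * k + 1) → ℕ) :=
  { π | ext' π 0 = ext' π (2 * k) ∧
      (∀ i : ℕ, i ≤ 2 * k →
        (Even i → 1 ≤ ext' π i ∧ ext' π i ≤ p) ∧ (Odd i → 1 ≤ ext' π i ∧ ext' π i ≤ n)) ∧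
      (∀ i ∈ Finset.Icc 1 (2 * k), ∀ j ∈ Finset.Icc 1 (2 * k),
        ((∃ B ∈ σ, i ∈ B ∧ j ∈ B) ↔
          ((ext' π (i - 1), ext' π i) = (ext' π (j - 1), ext' π j) ∨
            (ext' π (i - 1), ext' π i) = (ext' π j, ext' π (j - 1))))) }

/-- The set of W-circuits of length `2k` (Wigner link function) matching `σ`. -/
def PiW (n k : ℕ) (σ : Finset (Finset ℕ)) : Set (Fin (2 * k + 1) → ℕ) :=
  { π | ext' π 0 = ext' π (2 * k) ∧
      (∀ i : ℕ, i ≤ 2 * k → 1 ≤ ext' π i ∧ ext' π i ≤ n) ∧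
      (∀ i ∈ Finset.Icc 1 (2 * k), ∀ j ∈ Finset.Icc 1 (2 * k),
        ((∃ B ∈ σ, i ∈ B ∧ j ∈ B) ↔
          Sym2.mk (ext' π (i - 1), ext' π i) = Sym2.mk (ext' π (j - 1), ext' π j))) }

/-- Positions `i, j ∈ {0,…,2k}` carry the same value in every circuit of `Π_S(σ)`. -/
def SameVal (k : ℕ) (σ : Finset (Finset ℕ)) (i j : ℕ) : Prop :=
  ∀ p n : ℕ, ∀ π ∈ PiS p n k σ, ext' π i = ext' π j

/-- Canonical representative (least equivalent position) of position `i`. -/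
def rep (k : ℕ) (σ : Finset (Finset ℕ)) (i : ℕ) : Fin (2 * k + 1) :=
  ⟨min (sInf {j | SameVal k σ i j}) (2 * k), by omega⟩

/-- The quantity `I_y(σ)`: `y^r` times the integral over `[0,1]^{b+1}` of the product over
the blocks of `σ` of `g_{|B|}` evaluated at the variables of the generating vertices
corresponding to the first appearance of each block.  (Assigning one variable to each
position and identifying forced-equal positions gives the same value as integrating over
one variable per generating vertex.) -/
def Iy (k : ℕ) (y : ℝ) (g : ℕ → ℝ → ℝ → ℝ) (σ : Finset (Finset ℕ)) : ℝ :=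
  y ^ evenGenCount σ *
    ∫ x : Fin (2 * k + 1) → ℝ,
      (∏ B ∈ σ, g B.card (x (rep k σ (minOf B - 1))) (x (rep k σ (minOf B))))
      ∂(Measure.pi fun _ => volume.restrict (Set.Icc (0 : ℝ) 1))

/-- sup of `|g|` over `[0,1]²`. -/
def Msup (g : ℝ → ℝ → ℝ) : ℝ :=
  sSup ((fun z : ℝ × ℝ => |g z.1 z.2|) '' (Set.Icc (0 : ℝ) 1 ×ˢ Set.Icc (0 : ℝ) 1))

/-- `M_m`: sup norm of `g_{m}` for even `m` (here `g k` codes `g_{2k}`), `0` for odd `m`. -/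
def Mval (g : ℕ → ℝ → ℝ → ℝ) (m : ℕ) : ℝ :=
  if Even m then Msup (g (m / 2)) else 0

/-- `α_{2k} = Σ_{σ ∈ P(2k)} M_σ`. -/
def alphaCarleman (g : ℕ → ℝ → ℝ → ℝ) (m : ℕ) : ℝ :=
  ∑ P ∈ partitionsOf m, ∏ B ∈ P, Mval g B.card

/-- Assumption A for the triangular array `x`, truncation levels `t`,
pre-limit functions `gn` (where `gn k n` codes `g_{2k,n}`) and limit functions
`g` (where `g k` codes `g_{2k}`), with aspect ratio `y`. -/
structure AssumpA {Ω : Type*} [MeasurableSpace Ω] (Pr : Measure Ω) (y : ℝ) (p : ℕ → ℕ)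
    (x : (n : ℕ) → Fin (p n) → Fin n → Ω → ℝ) (t : ℕ → ℝ≥0∞)
    (gn : ℕ → ℕ → ℝ → ℝ → ℝ) (g : ℕ → ℝ → ℝ → ℝ) : Prop where
  prob : IsProbabilityMeasure Pr
  ypos : 0 < y
  ratio : Tendsto (fun n => (p n : ℝ) / n) atTop (𝓝 y)
  meas : ∀ n i j, Measurable (x n i j)
  indep : ∀ n, iIndepFun
    (fun ij : Fin (p n) × Fin n => x n ij.1 ij.2) Pr
  gn_bdd : ∀ k n, ∃ M : ℝ, ∀ a ∈ Set.Icc (0 : ℝ) 1, ∀ b ∈ Set.Icc (0 : ℝ) 1,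
    |gn k n a b| ≤ M
  gn_riemann : ∀ k n,
    volume {z : ℝ × ℝ | z ∈ Set.Icc (0 : ℝ) 1 ×ˢ Set.Icc (0 : ℝ) 1 ∧
      ¬ ContinuousWithinAt (fun w : ℝ × ℝ => gn k n w.1 w.2)
          (Set.Icc (0 : ℝ) 1 ×ˢ Set.Icc (0 : ℝ) 1) z} = 0
  moment_even : ∀ k : ℕ, 1 ≤ k → ∀ n : ℕ, 1 ≤ n → ∀ i j,
    (n : ℝ) * ∫ ω, (trunc (t n) (x n i j ω)) ^ (2 * k) ∂Pr
      = gn k n (((i : ℕ) + 1) / (p n)) (((j : ℕ) + 1) / n)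
  moment_odd : ∀ k : ℕ, 1 ≤ k → ∀ α : ℝ, α < 1 →
    Tendsto (fun n : ℕ => (n : ℝ) ^ α *
      ⨆ i : Fin (p n), ⨆ j : Fin n,
        |∫ ω, (trunc (t n) (x n i j ω)) ^ (2 * k - 1) ∂Pr|) atTop (𝓝 0)
  g_unif : ∀ k, TendstoUniformlyOn (fun n (z : ℝ × ℝ) => gn k n z.1 z.2)
    (fun z : ℝ × ℝ => g k z.1 z.2) atTop (Set.Icc (0 : ℝ) 1 ×ˢ Set.Icc (0 : ℝ) 1)
  carleman : ¬ Summable (fun k : ℕ =>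
    (alphaCarleman g (2 * (k + 1))) ^ (-(1 / (2 * ((k : ℝ) + 1)))))

/-- The truncated matrix `Z_p` as a random matrix. -/
def Zmat {Ω : Type*} (p : ℕ → ℕ) (x : (n : ℕ) → Fin (p n) → Fin n → Ω → ℝ)
    (t : ℕ → ℝ≥0∞) (n : ℕ) (ω : Ω) : Matrix (Fin (p n)) (Fin n) ℝ :=
  Matrix.of fun i j => trunc (t n) (x n i j ω)

end
noncomputable section

lemma isHermitian_of_transpose_eq {m : ℕ} {A : Matrix (Fin m) (Fin m) ℝ}
    (h : Aᵀ = A) : A.IsHermitian := by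
  show Aᴴ = A
  rw [Matrix.conjTranspose_eq_transpose_of_trivial]
  exact h

lemma smulGram_isHermitian {p n : ℕ} (c : ℝ) (Z : Matrix (Fin p) (Fin n) ℝ) :
    (c • (Z * Zᵀ)).IsHermitian := by
  show _ᴴ = _
  rw [Matrix.conjTranspose_eq_transpose_of_trivial, Matrix.transpose_smul,
    Matrix.transpose_mul, Matrix.transpose_transpose]

/-- Symmetrization: the symmetric matrix whose `(i,j)` entry, for `i ≤ j`, is `f i j`. -/
def symMat (n : ℕ) (f : Fin n → Fin n → ℝ) : Matrix (Fin n) (Fin n) ℝ :=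
  Matrix.of fun i j => if (i : ℕ) ≤ (j : ℕ) then f i j else f j i

lemma symMat_isHermitian (n : ℕ) (f : Fin n → Fin n → ℝ) : (symMat n f).IsHermitian := by
  apply isHermitian_of_transpose_eq
  ext i j
  simp only [Matrix.transpose_apply, symMat, Matrix.of_apply]
  by_cases h1 : (j : ℕ) ≤ (i : ℕ) <;> by_cases h2 : (i : ℕ) ≤ (j : ℕ) <;>
    simp only [h1, h2, if_true, if_false]
  · have : i = j := Fin.ext (le_antisymm h2 h1)
    subst this; rfl
  · omega

/-- A partition (as a finite set of blocks) is non-crossing. -/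
def NonCrossing (P : Finset (Finset ℕ)) : Prop :=
  ¬ ∃ a b c d : ℕ, a < b ∧ b < c ∧ c < d ∧
    ∃ B ∈ P, ∃ C ∈ P, B ≠ C ∧ a ∈ B ∧ c ∈ B ∧ b ∈ C ∧ d ∈ C

/-- `α_{m} = Σ_{σ ∈ E(m)} C_σ`, the multiplicative extension of `C` summed over
partitions with all blocks of even size. -/
def alphaE (C : ℕ → ℝ) (m : ℕ) : ℝ :=
  ∑ P ∈ (partitionsOf m).filter (fun P => ∀ B ∈ P, Even B.card), ∏ B ∈ P, C B.card

/-- `v² 1{|v| > t}`. -/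
def tailSq (t : ℝ≥0∞) (v : ℝ) : ℝ := if ENNReal.ofReal |v| ≤ t then 0 else v ^ 2

/-- The (untruncated) random matrix with entries `x n i j`. -/
def Xmat {Ω : Type*} (p : ℕ → ℕ) (x : (n : ℕ) → Fin (p n) → Fin n → Ω → ℝ)
    (n : ℕ) (ω : Ω) : Matrix (Fin (p n)) (Fin n) ℝ :=
  Matrix.of fun i j => x n i j ω

end
noncomputable section
/-- Cumulative distribution function of a measure on ℝ. -/
def cdfOf (μ : Measure ℝ) (v : ℝ) : ℝ := (μ (Set.Iic v)).toReal

/-- The Lévy distance between two (distribution) functions. -/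
def levyDist (F G : ℝ → ℝ) : ℝ :=
  sInf {ε : ℝ | 0 < ε ∧ ∀ v : ℝ, F (v - ε) - ε ≤ G v ∧ G v ≤ F (v + ε) + ε}
end

noncomputable section LevyAux
open scoped RealInnerProductSpace

/-- view a plain vector as an element of Euclidean space -/
def toE {m : ℕ} (v : Fin m → ℝ) : EuclideanSpace ℝ (Fin m) := WithLp.toLp 2 v

lemma dot_eq_inner' {p : ℕ} (x y : Fin p → ℝ) :
    x ⬝ᵥ y = ⟪toE x, toE y⟫ := by
  simp [toE, dotProduct, PiLp.inner_apply, RCLike.inner_apply, mul_comm]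

lemma abs_dot_le' {m : ℕ} (x y : Fin m → ℝ) : |x ⬝ᵥ y| ≤ ‖toE x‖ * ‖toE y‖ := by
  rw [dot_eq_inner']
  exact abs_real_inner_le_norm _ _

lemma dot_mulVec_eig {p : ℕ} {S : Matrix (Fin p) (Fin p) ℝ} (hS : S.IsHermitian)
    (x : EuclideanSpace ℝ (Fin p)) :
    (x : Fin p → ℝ) ⬝ᵥ S.mulVec x
      = ∑ i, hS.eigenvalues i * (⟪hS.eigenvectorBasis i, x⟫)^2 := by
  set u := hS.eigenvectorBasis with hu
  have hst : Sᵀ = S := by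
    have := hS.eq
    rwa [Matrix.conjTranspose_eq_transpose_of_trivial] at this
  have h1 : (x : Fin p → ℝ) ⬝ᵥ S.mulVec x = ⟪x, toE (S.mulVec x)⟫ :=
    dot_eq_inner' x _
  rw [h1, ← u.sum_inner_mul_inner x (toE (S.mulVec x))]
  congr 1; funext i
  have h2 : ⟪u i, toE (S.mulVec x)⟫
      = hS.eigenvalues i * ⟪u i, x⟫ := by
    rw [show ⟪u i, toE (S.mulVec x)⟫
        = (u i : Fin p → ℝ) ⬝ᵥ S.mulVec x from (dot_eq_inner' (u i : Fin p → ℝ) (S.mulVec x)).symm]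
    rw [Matrix.dotProduct_mulVec]
    have h3 : Matrix.vecMul (u i : Fin p → ℝ) S = S.mulVec (u i) := by
      rw [← hst, Matrix.vecMul_transpose, hst]
    rw [h3, show S *ᵥ (u i : Fin p → ℝ) = hS.eigenvalues i • (u i : Fin p → ℝ) from
      hS.mulVec_eigenvectorBasis i, smul_dotProduct, dot_eq_inner', smul_eq_mul]
    rfl
  rw [h2, real_inner_comm x (u i)]
  ring

lemma sum_norm_sq_transpose_mulVec {p n : ℕ} (M : Matrix (Fin p) (Fin n) ℝ)
    (u : OrthonormalBasis (Fin p) ℝ (EuclideanSpace ℝ (Fin p))) :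
    ∑ i, ‖toE (Mᵀ.mulVec (u i))‖^2 = Matrix.trace (M * Mᵀ) := by
  have hns : ∀ i, ‖toE (Mᵀ.mulVec (u i))‖^2
      = ∑ j, (⟪toE (fun l => M l j), u i⟫ * ⟪u i, toE (fun l => M l j)⟫) := by
    intro i
    rw [← real_inner_self_eq_norm_sq, PiLp.inner_apply]
    refine Finset.sum_congr rfl fun j _ => ?_
    have e1 : ⟪toE (fun l => M l j), u i⟫ = (fun l => M l j) ⬝ᵥ (u i : Fin p → ℝ) :=
      (dot_eq_inner' (fun l => M l j) (u i : Fin p → ℝ)).symm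
    have e1b : ⟪u i, toE (fun l => M l j)⟫ = (fun l => M l j) ⬝ᵥ (u i : Fin p → ℝ) := by
      rw [real_inner_comm]; exact e1
    have e2 : (toE (Mᵀ.mulVec (u i))) j = (fun l => M l j) ⬝ᵥ (u i : Fin p → ℝ) := by
      simp [toE, Matrix.mulVec, dotProduct]
    rw [e1, e1b]
    rw [show ⟪(toE (Mᵀ.mulVec (u i))) j, (toE (Mᵀ.mulVec (u i))) j⟫
        = (toE (Mᵀ.mulVec (u i))) j * (toE (Mᵀ.mulVec (u i))) j from rfl, e2]
  rw [Finset.sum_congr rfl (fun i _ => hns i), Finset.sum_comm]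
  have h2 : ∀ j, ∑ i, (⟪toE (fun l => M l j), u i⟫ * ⟪u i, toE (fun l => M l j)⟫)
      = ∑ l, (M l j)^2 := by
    intro j
    rw [u.sum_inner_mul_inner]
    rw [show ⟪toE (fun l => M l j), toE (fun l => M l j)⟫
        = (fun l => M l j) ⬝ᵥ (fun l => M l j) from (dot_eq_inner' _ _).symm]
    simp [dotProduct, sq]
  rw [Finset.sum_congr rfl (fun j _ => h2 j), Finset.sum_comm]
  simp [Matrix.trace, Matrix.diag, Matrix.mul_apply, sq]

lemma sum_abs_eig_le {p n : ℕ} (A B : Matrix (Fin p) (Fin n) ℝ)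
    (hX : (B * Bᵀ - A * Aᵀ).IsHermitian)
    (hAt hBt hEt : ℝ)
    (hA2 : ∑ i, ‖toE (Aᵀ.mulVec (hX.eigenvectorBasis i))‖^2 = hAt)
    (hB2 : ∑ i, ‖toE (Bᵀ.mulVec (hX.eigenvectorBasis i))‖^2 = hBt)
    (hE2 : ∑ i, ‖toE ((B - A)ᵀ.mulVec (hX.eigenvectorBasis i))‖^2 = hEt) :
    ∑ i, |hX.eigenvalues i| ≤ Real.sqrt hEt * Real.sqrt (2 * (hAt + hBt)) := by
  set u := hX.eigenvectorBasis with hu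
  set X := B * Bᵀ - A * Aᵀ with hXdef
  set E := B - A with hE
  have hdecomp : X = B * Eᵀ + E * Aᵀ := by
    rw [hE, hXdef, Matrix.transpose_sub, Matrix.mul_sub, Matrix.sub_mul]
    abel
  have heig : ∀ i, hX.eigenvalues i
      = (Bᵀ *ᵥ (u i : Fin p → ℝ)) ⬝ᵥ (Eᵀ *ᵥ (u i : Fin p → ℝ))
        + (Eᵀ *ᵥ (u i : Fin p → ℝ)) ⬝ᵥ (Aᵀ *ᵥ (u i : Fin p → ℝ)) := by
    intro i
    have h0 : X *ᵥ (u i : Fin p → ℝ) = hX.eigenvalues i • (u i : Fin p → ℝ) :=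
      hX.mulVec_eigenvectorBasis i
    have h1 : (u i : Fin p → ℝ) ⬝ᵥ X *ᵥ (u i : Fin p → ℝ) = hX.eigenvalues i := by
      rw [h0, dotProduct_smul, smul_eq_mul,
        show (u i : Fin p → ℝ) ⬝ᵥ (u i : Fin p → ℝ) = ⟪u i, u i⟫ from dot_eq_inner' (u i : Fin p → ℝ) (u i : Fin p → ℝ)]
      have hone : ⟪u i, u i⟫ = (1:ℝ) := by
        have hn := u.orthonormal.1 i
        rw [real_inner_self_eq_norm_sq, hn]; norm_num
      rw [hone, mul_one]
    rw [← h1, hdecomp]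
    rw [Matrix.add_mulVec, dotProduct_add,
      ← Matrix.mulVec_mulVec, ← Matrix.mulVec_mulVec,
      Matrix.dotProduct_mulVec _ B, Matrix.dotProduct_mulVec _ E,
      ← Matrix.mulVec_transpose, ← Matrix.mulVec_transpose]
  have habs : ∀ i, |hX.eigenvalues i| ≤
      ‖toE (Eᵀ.mulVec (u i))‖ * (‖toE (Aᵀ.mulVec (u i))‖ + ‖toE (Bᵀ.mulVec (u i))‖) := by
    intro i
    rw [heig i]
    refine (abs_add_le _ _).trans ?_
    have c1 := abs_dot_le' (Bᵀ *ᵥ (u i : Fin p → ℝ)) (Eᵀ *ᵥ (u i : Fin p → ℝ))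
    have c2 := abs_dot_le' (Eᵀ *ᵥ (u i : Fin p → ℝ)) (Aᵀ *ᵥ (u i : Fin p → ℝ))
    nlinarith [norm_nonneg (toE (Eᵀ.mulVec (u i))), norm_nonneg (toE (Aᵀ.mulVec (u i))),
      norm_nonneg (toE (Bᵀ.mulVec (u i)))]
  calc ∑ i, |hX.eigenvalues i|
      ≤ ∑ i, ‖toE (Eᵀ.mulVec (u i))‖ * (‖toE (Aᵀ.mulVec (u i))‖ + ‖toE (Bᵀ.mulVec (u i))‖) :=
        Finset.sum_le_sum fun i _ => habs i
    _ ≤ Real.sqrt (∑ i, ‖toE (Eᵀ.mulVec (u i))‖^2) *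
          Real.sqrt (∑ i, (‖toE (Aᵀ.mulVec (u i))‖ + ‖toE (Bᵀ.mulVec (u i))‖)^2) :=
        Real.sum_mul_le_sqrt_mul_sqrt _ _ _
    _ ≤ Real.sqrt hEt * Real.sqrt (2 * (hAt + hBt)) := by
        rw [hE2]
        refine mul_le_mul_of_nonneg_left ?_ (Real.sqrt_nonneg _)
        refine Real.sqrt_le_sqrt ?_
        rw [← hA2, ← hB2, ← Finset.sum_add_distrib, Finset.mul_sum]
        refine Finset.sum_le_sum fun i _ => ?_
        nlinarith [sq_nonneg (‖toE (Aᵀ.mulVec (u i))‖ - ‖toE (Bᵀ.mulVec (u i))‖)]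

lemma inner_eigBasis_eq_zero_of_mem_span {p : ℕ}
    (u : OrthonormalBasis (Fin p) ℝ (EuclideanSpace ℝ (Fin p))) (T : Finset (Fin p))
    {x : EuclideanSpace ℝ (Fin p)} (hx : x ∈ Submodule.span ℝ (u '' ↑T))
    {i : Fin p} (hi : i ∉ T) : ⟪u i, x⟫ = 0 := by
  have hle : Submodule.span ℝ (u '' ↑T) ≤ (ℝ ∙ u i)ᗮ := by
    rw [Submodule.span_le]
    rintro y ⟨k, hk, rfl⟩
    rw [SetLike.mem_coe, Submodule.mem_orthogonal_singleton_iff_inner_right]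
    exact u.orthonormal.2 (fun h : i = k => hi (h ▸ hk))
  exact Submodule.mem_orthogonal_singleton_iff_inner_right.mp (hle hx)

lemma parseval_restrict {p : ℕ}
    (u : OrthonormalBasis (Fin p) ℝ (EuclideanSpace ℝ (Fin p))) (T : Finset (Fin p))
    {x : EuclideanSpace ℝ (Fin p)} (hx : x ∈ Submodule.span ℝ (u '' ↑T)) :
    ∑ i ∈ T, (⟪u i, x⟫)^2 = ⟪x, x⟫ := by
  have hfull : ∑ i, (⟪u i, x⟫)^2 = ⟪x, x⟫ := by
    rw [← u.sum_inner_mul_inner x x]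
    refine Finset.sum_congr rfl fun i _ => ?_
    rw [real_inner_comm x (u i)]; ring
  rw [← hfull]
  refine Finset.sum_subset (Finset.subset_univ T) ?_
  intro i _ hi
  rw [inner_eigBasis_eq_zero_of_mem_span u T hx hi]
  ring

lemma quad_le_span {p : ℕ} {S : Matrix (Fin p) (Fin p) ℝ} (hS : S.IsHermitian)
    (t : ℝ) (T : Finset (Fin p)) (hT : ∀ i ∈ T, hS.eigenvalues i ≤ t)
    {x : EuclideanSpace ℝ (Fin p)}
    (hx : x ∈ Submodule.span ℝ (hS.eigenvectorBasis '' ↑T)) :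
    (x : Fin p → ℝ) ⬝ᵥ S.mulVec x ≤ t * ⟪x, x⟫ := by
  rw [dot_mulVec_eig hS x, ← parseval_restrict hS.eigenvectorBasis T hx]
  rw [show (∑ i, hS.eigenvalues i * (⟪hS.eigenvectorBasis i, x⟫)^2)
      = ∑ i ∈ T, hS.eigenvalues i * (⟪hS.eigenvectorBasis i, x⟫)^2 from
    (Finset.sum_subset (Finset.subset_univ T) (fun i _ hi => by
      rw [inner_eigBasis_eq_zero_of_mem_span hS.eigenvectorBasis T hx hi]; ring)).symm]
  rw [Finset.mul_sum]
  exact Finset.sum_le_sum fun i hi =>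
    mul_le_mul_of_nonneg_right (hT i hi) (sq_nonneg _)

lemma quad_gt_span {p : ℕ} {S : Matrix (Fin p) (Fin p) ℝ} (hS : S.IsHermitian)
    (t : ℝ) (T : Finset (Fin p)) (hT : ∀ i ∈ T, t < hS.eigenvalues i)
    {x : EuclideanSpace ℝ (Fin p)}
    (hx : x ∈ Submodule.span ℝ (hS.eigenvectorBasis '' ↑T))
    (hx1 : ⟪x, x⟫ = (1:ℝ)) :
    t < (x : Fin p → ℝ) ⬝ᵥ S.mulVec x := by
  rw [dot_mulVec_eig hS x]
  have hres : ∑ i ∈ T, (⟪hS.eigenvectorBasis i, x⟫)^2 = 1 := by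
    rw [parseval_restrict hS.eigenvectorBasis T hx, hx1]
  rw [show (∑ i, hS.eigenvalues i * (⟪hS.eigenvectorBasis i, x⟫)^2)
      = ∑ i ∈ T, hS.eigenvalues i * (⟪hS.eigenvectorBasis i, x⟫)^2 from
    (Finset.sum_subset (Finset.subset_univ T) (fun i _ hi => by
      rw [inner_eigBasis_eq_zero_of_mem_span hS.eigenvectorBasis T hx hi]; ring)).symm]
  have hne : ∃ i ∈ T, (⟪hS.eigenvectorBasis i, x⟫)^2 ≠ 0 := by
    by_contra hall
    push_neg at hall
    rw [Finset.sum_congr rfl (fun i hi => hall i hi)] at hres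
    simp at hres
  obtain ⟨i0, hi0T, hi0⟩ := hne
  have : ∑ i ∈ T, t * (⟪hS.eigenvectorBasis i, x⟫)^2
      < ∑ i ∈ T, hS.eigenvalues i * (⟪hS.eigenvectorBasis i, x⟫)^2 := by
    refine Finset.sum_lt_sum (fun i hi =>
      mul_le_mul_of_nonneg_right (le_of_lt (hT i hi)) (sq_nonneg _)) ⟨i0, hi0T, ?_⟩
    have hpos : 0 < (⟪hS.eigenvectorBasis i0, x⟫)^2 := lt_of_le_of_ne (sq_nonneg _) (Ne.symm hi0)
    exact mul_lt_mul_of_pos_right (hT i0 hi0T) hpos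
  calc t = t * ∑ i ∈ T, (⟪hS.eigenvectorBasis i, x⟫)^2 := by rw [hres, mul_one]
    _ = ∑ i ∈ T, t * (⟪hS.eigenvectorBasis i, x⟫)^2 := Finset.mul_sum _ _ _
    _ < _ := this

lemma sum_quad_le_sum_abs_eig {p : ℕ} {X : Matrix (Fin p) (Fin p) ℝ} (hX : X.IsHermitian)
    {d : ℕ} (g : Fin d → EuclideanSpace ℝ (Fin p)) (hg : Orthonormal ℝ g) :
    ∑ j, (g j : Fin p → ℝ) ⬝ᵥ X.mulVec (g j) ≤ ∑ i, |hX.eigenvalues i| := by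
  rw [Finset.sum_congr rfl (fun j _ => dot_mulVec_eig hX (g j)), Finset.sum_comm]
  refine Finset.sum_le_sum fun i _ => ?_
  have hbessel : ∑ j, (⟪hX.eigenvectorBasis i, g j⟫)^2 ≤ 1 := by
    have h := hg.sum_inner_products_le (hX.eigenvectorBasis i) (s := Finset.univ)
    have hn : ‖hX.eigenvectorBasis i‖ = 1 := hX.eigenvectorBasis.orthonormal.1 i
    rw [hn] at h
    calc ∑ j, (⟪hX.eigenvectorBasis i, g j⟫)^2
        = ∑ j, ‖⟪g j, hX.eigenvectorBasis i⟫‖^2 := by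
          refine Finset.sum_congr rfl fun j _ => ?_
          rw [real_inner_comm, Real.norm_eq_abs, sq_abs]
      _ ≤ 1^2 := h
      _ = 1 := one_pow 2
  have hnonneg : (0:ℝ) ≤ ∑ j, (⟪hX.eigenvectorBasis i, g j⟫)^2 :=
    Finset.sum_nonneg fun j _ => sq_nonneg _
  calc ∑ j, hX.eigenvalues i * (⟪hX.eigenvectorBasis i, g j⟫)^2
      = hX.eigenvalues i * ∑ j, (⟪hX.eigenvectorBasis i, g j⟫)^2 := (Finset.mul_sum _ _ _).symm
    _ ≤ |hX.eigenvalues i| * ∑ j, (⟪hX.eigenvectorBasis i, g j⟫)^2 :=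
        mul_le_mul_of_nonneg_right (le_abs_self _) hnonneg
    _ ≤ |hX.eigenvalues i| * 1 := mul_le_mul_of_nonneg_left hbessel (abs_nonneg _)
    _ = |hX.eigenvalues i| := mul_one _

end LevyAux


noncomputable section LevyAux2
open scoped RealInnerProductSpace
open MeasureTheory

lemma cdfOf_esdGram_eq {p n : ℕ} (hp : 0 < p) (A : Matrix (Fin p) (Fin n) ℝ) (v : ℝ) :
    cdfOf (esdGram A) v
      = ((Finset.univ.filter fun i => (gram_isHermitian A).eigenvalues i ≤ v).card : ℝ) / p := by
  rw [cdfOf, esdGram, esd, Measure.smul_apply]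
  rw [Measure.finset_sum_apply]
  rw [Finset.sum_congr rfl (fun i _ => Measure.dirac_apply' _ measurableSet_Iic)]
  have : ∑ i : Fin p, Set.indicator (Set.Iic v) 1 ((gram_isHermitian A).eigenvalues i)
      = ((Finset.univ.filter fun i => (gram_isHermitian A).eigenvalues i ≤ v).card : ℝ≥0∞) := by
    rw [Finset.sum_congr rfl (fun i _ => by
      rw [Set.indicator_apply]
      simp only [Set.mem_Iic, Pi.one_apply] : ∀ i ∈ Finset.univ,
        Set.indicator (Set.Iic v) 1 ((gram_isHermitian A).eigenvalues i)
        = if (gram_isHermitian A).eigenvalues i ≤ v then (1:ℝ≥0∞) else 0)]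
    rw [Finset.sum_boole]
  rw [this, smul_eq_mul, ENNReal.toReal_mul, ENNReal.toReal_inv]
  simp [div_eq_inv_mul]

lemma levy_onesided {p n : ℕ} (hp : 0 < p) (A B : Matrix (Fin p) (Fin n) ℝ)
    (hX : (B * Bᵀ - A * Aᵀ).IsHermitian) (ε v : ℝ) (hε : 0 < ε)
    (ht : ∑ i, |hX.eigenvalues i| ≤ p * ε^2) :
    cdfOf (esdGram A) (v - ε) - ε ≤ cdfOf (esdGram B) v := by
  by_contra hcon
  push_neg at hcon
  rw [cdfOf_esdGram_eq hp A, cdfOf_esdGram_eq hp B] at hcon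
  set hSA := gram_isHermitian A with hhSA
  set hSB := gram_isHermitian B with hhSB
  set SA : Finset (Fin p) := Finset.univ.filter (fun i => hSA.eigenvalues i ≤ v - ε) with hSAdef
  set SB : Finset (Fin p) := Finset.univ.filter (fun i => hSB.eigenvalues i ≤ v) with hSBdef
  have hcardA : SA.card ≤ p := le_trans (Finset.card_le_univ SA) (by simp)
  have hcardB : SB.card ≤ p := le_trans (Finset.card_le_univ SB) (by simp)
  have hac : (SB.card : ℝ) + ε * p < SA.card := by
    have hppos : (0:ℝ) < p := by exact_mod_cast hp
    rw [div_lt_iff₀ hppos, sub_mul, div_mul_cancel₀ _ (ne_of_gt hppos)] at hcon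
    linarith
  -- subspaces
  set uA := hSA.eigenvectorBasis with huA
  set uB := hSB.eigenvectorBasis with huB
  set W1 : Submodule ℝ (EuclideanSpace ℝ (Fin p)) := Submodule.span ℝ (uA '' ↑SA) with hW1
  set W2 : Submodule ℝ (EuclideanSpace ℝ (Fin p)) := Submodule.span ℝ (uB '' ↑SBᶜ) with hW2
  have hrank : ∀ (u : OrthonormalBasis (Fin p) ℝ (EuclideanSpace ℝ (Fin p)))
      (T : Finset (Fin p)),
      Module.finrank ℝ ↥(Submodule.span ℝ (u '' ↑T)) = T.card := by
    intro u T
    have hli : LinearIndependent ℝ (fun k : {x // x ∈ T} => u k.val) :=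
      (u.orthonormal.linearIndependent).comp Subtype.val Subtype.val_injective
    have hrange : Set.range (fun k : {x // x ∈ T} => u k.val) = u '' ↑T := by
      rw [show (fun k : {x // x ∈ T} => u k.val) = u ∘ Subtype.val from rfl,
        Set.range_comp, Subtype.range_coe]
    rw [← hrange, finrank_span_eq_card hli, Fintype.card_coe]
  have hr1 : Module.finrank ℝ ↥W1 = SA.card := hrank uA SA
  have hr2 : Module.finrank ℝ ↥W2 = p - SB.card := by
    rw [hW2, hrank uB SBᶜ, Finset.card_compl, Fintype.card_fin]
  set d := Module.finrank ℝ ↥(W1 ⊓ W2) with hd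
  have hsum := Submodule.finrank_sup_add_finrank_inf_eq W1 W2
  have hsup : Module.finrank ℝ ↥(W1 ⊔ W2) ≤ p := by
    refine le_trans (Submodule.finrank_le _) ?_
    rw [finrank_euclideanSpace, Fintype.card_fin]
  have hdge : SA.card ≤ d + SB.card := by omega
  have hdreal : ε * p < (d : ℝ) := by
    have : (SA.card : ℝ) ≤ (d : ℝ) + SB.card := by exact_mod_cast hdge
    linarith
  have hdpos : 0 < d := by
    have hεp : (0:ℝ) < ε * p := mul_pos hε (by exact_mod_cast hp)
    by_contra hd0
    push_neg at hd0
    interval_cases d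
    · simp at hdreal; linarith
  -- orthonormal family in the intersection
  set bW := stdOrthonormalBasis ℝ ↥(W1 ⊓ W2) with hbW
  set g : Fin d → EuclideanSpace ℝ (Fin p) := fun j => ((bW j : ↥(W1 ⊓ W2)) : EuclideanSpace ℝ (Fin p)) with hg
  have hOrtho : Orthonormal ℝ g := by
    have h := bW.orthonormal
    rw [orthonormal_iff_ite] at h ⊢
    intro i j
    have := h i j
    rwa [Submodule.coe_inner] at this
  have hmem : ∀ j, g j ∈ W1 ⊓ W2 := fun j => (bW j).2
  have hnorm1 : ∀ j, ⟪g j, g j⟫ = (1:ℝ) := by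
    intro j
    rw [real_inner_self_eq_norm_sq, hOrtho.1 j]
    norm_num
  -- quadratic form bounds
  have hquadA : ∀ j, (g j : Fin p → ℝ) ⬝ᵥ (A * Aᵀ).mulVec (g j) ≤ v - ε := by
    intro j
    have h := quad_le_span hSA (v - ε) SA
      (fun i hi => (Finset.mem_filter.mp hi).2)
      ((Submodule.mem_inf.mp (hmem j)).1)
    rwa [hnorm1 j, mul_one] at h
  have hquadB : ∀ j, v < (g j : Fin p → ℝ) ⬝ᵥ (B * Bᵀ).mulVec (g j) := by
    intro j
    refine quad_gt_span hSB v SBᶜ ?_ ((Submodule.mem_inf.mp (hmem j)).2) (hnorm1 j)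
    intro i hi
    have := Finset.mem_compl.mp hi
    rw [hSBdef, Finset.mem_filter] at this
    push_neg at this
    exact this (Finset.mem_univ i)
  have hquadX : ∀ j, ε < (g j : Fin p → ℝ) ⬝ᵥ (B * Bᵀ - A * Aᵀ).mulVec (g j) := by
    intro j
    rw [Matrix.sub_mulVec, dotProduct_sub]
    linarith [hquadA j, hquadB j]
  have hbessel := sum_quad_le_sum_abs_eig hX g hOrtho
  have hlt : (d : ℝ) * ε < ∑ j, (g j : Fin p → ℝ) ⬝ᵥ (B * Bᵀ - A * Aᵀ).mulVec (g j) := by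
    have hne : (Finset.univ : Finset (Fin d)).Nonempty := by
      rw [Finset.univ_nonempty_iff]
      exact Fin.pos_iff_nonempty.mp hdpos
    calc (d : ℝ) * ε = ∑ _j : Fin d, ε := by
          rw [Finset.sum_const, Finset.card_univ, Fintype.card_fin, nsmul_eq_mul]
      _ < _ := Finset.sum_lt_sum_of_nonempty hne (fun j _ => hquadX j)
  have : (p : ℝ) * ε^2 < (d : ℝ) * ε := by nlinarith
  linarith

end LevyAux2


lemma trace_gram_nonneg {p n : ℕ} (M : Matrix (Fin p) (Fin n) ℝ) :
    0 ≤ Matrix.trace (M * Mᵀ) := by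
  simp only [Matrix.trace, Matrix.diag, Matrix.mul_apply, Matrix.transpose_apply]
  exact Finset.sum_nonneg fun i _ => Finset.sum_nonneg fun j _ => mul_self_nonneg _

/-- Lemma 5.5 / Corollary A.42 of Bai–Silverstein: the Lévy distance
between the ESDs of `AAᵀ` and `BBᵀ` satisfies
`L⁴ ≤ (2/p²)·Tr(AAᵀ + BBᵀ)·Tr((A−B)(A−B)ᵀ)`. -/
theorem levyDist_esd_gram_pow_four_le
    (p n : ℕ) (hp : 0 < p) (A B : Matrix (Fin p) (Fin n) ℝ) :
    (levyDist (cdfOf (esdGram A)) (cdfOf (esdGram B))) ^ 4 ≤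
      (2 / (p : ℝ) ^ 2) * Matrix.trace (A * Aᵀ + B * Bᵀ) *
        Matrix.trace ((A - B) * (A - B)ᵀ) := by
  classical
  have hX : (B * Bᵀ - A * Aᵀ).IsHermitian := (gram_isHermitian B).sub (gram_isHermitian A)
  have hY : (A * Aᵀ - B * Bᵀ).IsHermitian := (gram_isHermitian A).sub (gram_isHermitian B)
  set tA := Matrix.trace (A * Aᵀ) with htA
  set tB := Matrix.trace (B * Bᵀ) with htB
  set tD := Matrix.trace ((A - B) * (A - B)ᵀ) with htD
  have htA0 : 0 ≤ tA := trace_gram_nonneg A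
  have htB0 : 0 ≤ tB := trace_gram_nonneg B
  have htD0 : 0 ≤ tD := trace_gram_nonneg (A - B)
  set R := Real.sqrt tD * Real.sqrt (2 * (tA + tB)) with hRdef
  have hR0 : 0 ≤ R := mul_nonneg (Real.sqrt_nonneg _) (Real.sqrt_nonneg _)
  have hgramswap : (B - A) * (B - A)ᵀ = (A - B) * (A - B)ᵀ := by
    rw [show B - A = -(A - B) from (neg_sub A B).symm, Matrix.transpose_neg,
      Matrix.neg_mul, Matrix.mul_neg, neg_neg]
  have hXsum : ∑ i, |hX.eigenvalues i| ≤ R := by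
    refine sum_abs_eig_le A B hX tA tB tD
      (sum_norm_sq_transpose_mulVec A _) (sum_norm_sq_transpose_mulVec B _) ?_
    rw [sum_norm_sq_transpose_mulVec (B - A) _, hgramswap]
  have hYsum : ∑ i, |hY.eigenvalues i| ≤ R := by
    have h := sum_abs_eig_le B A hY tB tA tD
      (sum_norm_sq_transpose_mulVec B _) (sum_norm_sq_transpose_mulVec A _)
      (sum_norm_sq_transpose_mulVec (A - B) _)
    rwa [add_comm tB tA] at h
  set S : Set ℝ := {ε : ℝ | 0 < ε ∧ ∀ v : ℝ,
      cdfOf (esdGram A) (v - ε) - ε ≤ cdfOf (esdGram B) v ∧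
      cdfOf (esdGram B) v ≤ cdfOf (esdGram A) (v + ε) + ε} with hSdef
  have hmem : ∀ ε : ℝ, 0 < ε → R ≤ p * ε^2 → ε ∈ S := by
    intro ε hε hR
    refine ⟨hε, fun v => ⟨?_, ?_⟩⟩
    · exact levy_onesided hp A B hX ε v hε (le_trans hXsum hR)
    · have h := levy_onesided hp B A hY ε (v + ε) hε (le_trans hYsum hR)
      rw [add_sub_cancel_right] at h
      linarith
  have hbdd : BddBelow S := ⟨0, fun x hx => le_of_lt hx.1⟩
  have hlevy : levyDist (cdfOf (esdGram A)) (cdfOf (esdGram B)) = sInf S := rfl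
  have hL0 : 0 ≤ levyDist (cdfOf (esdGram A)) (cdfOf (esdGram B)) := by
    rw [hlevy]
    exact Real.sInf_nonneg (fun x hx => le_of_lt hx.1)
  have hppos : (0:ℝ) < p := by exact_mod_cast hp
  have hRp0 : 0 ≤ R / p := div_nonneg hR0 (le_of_lt hppos)
  have hLle : levyDist (cdfOf (esdGram A)) (cdfOf (esdGram B)) ≤ Real.sqrt (R / p) := by
    rw [hlevy]
    refine le_of_forall_pos_le_add ?_
    intro η hη
    refine csInf_le hbdd (hmem _ (by positivity) ?_)
    have h1 : Real.sqrt (R/p)^2 = R/p := Real.sq_sqrt hRp0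
    have h2 : (p:ℝ) * (R/p) = R := by field_simp
    have h3 : R/p ≤ (Real.sqrt (R/p) + η)^2 := by
      nlinarith [Real.sqrt_nonneg (R/p), hη]
    calc R = p * (R/p) := h2.symm
      _ ≤ p * ((Real.sqrt (R/p) + η)^2) := mul_le_mul_of_nonneg_left h3 (le_of_lt hppos)
  calc (levyDist (cdfOf (esdGram A)) (cdfOf (esdGram B))) ^ 4
      ≤ (Real.sqrt (R / p)) ^ 4 := pow_le_pow_left₀ hL0 hLle 4
    _ = (R / p) ^ 2 := by
        rw [show (4:ℕ) = 2 * 2 from rfl, pow_mul, Real.sq_sqrt hRp0]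
    _ = (2 / (p : ℝ) ^ 2) * (tA + tB) * tD := by
        rw [div_pow, hRdef, mul_pow, Real.sq_sqrt htD0, Real.sq_sqrt (by linarith : (0:ℝ) ≤ 2 * (tA + tB))]
        ring
    _ = (2 / (p : ℝ) ^ 2) * Matrix.trace (A * Aᵀ + B * Bᵀ) * tD := by
        rw [Matrix.trace_add]
end

section
/- Let p = p(n) with p/n → y ∈ (0,∞). For each n let {x_{ij,n} : 1 ≤ i ≤ p, 1 ≤ j ≤ n} be independent real random variables on a common probability space, let t_n ∈ [0,∞], and set y_{ij,n} = x_{ij,n} 1{|x_{ij,n}| ≤ t_n}. Assume that for some constant C, n · E[y_{ij,n}^{2m}] ≤ C for all i, j, n and all m ∈ {1, 2, 3, 4}, and that (1/p) Σ_{i=1}^{p} Σ_{j=1}^{n} x_{ij,n}² 1{|x_{ij,n}| > t_n} → 0 almost surely (respectively, in probability). Then limsup_{n→∞} (1/p) Σ_{i=1}^{p} Σ_{j=1}^{n} x_{ij,n}² < ∞ almost surely (respectively, in probability). -/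
open MeasureTheory ProbabilityTheory Filter Topology Matrix
open scoped ENNReal NNReal BigOperators Classical

section
variable {Ω : Type*} [MeasurableSpace Ω] {Pr : Measure Ω} [IsProbabilityMeasure Pr]

lemma my_sub_pow_four_le (a b : ℝ) : (a - b)^4 ≤ 8*a^4 + 8*b^4 := by
  nlinarith [sq_nonneg (a+b), sq_nonneg (a-b), sq_nonneg (a^2-b^2), sq_nonneg (a^2+b^2),
    sq_nonneg (a*b), sq_nonneg ((a-b)^2), sq_nonneg ((a+b)^2)]

lemma my_integrable_pow_le_four {f : Ω → ℝ} (hf : Measurable f)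
    (h4 : Integrable (fun ω => f ω ^ 4) Pr) {k : ℕ} (hk : k ≤ 4) :
    Integrable (fun ω => f ω ^ k) Pr := by
  have hb : ∀ ω, ‖f ω ^ k‖ ≤ 1 + f ω ^ 4 := by
    intro ω
    rw [Real.norm_eq_abs, abs_pow]
    have h40 : (0:ℝ) ≤ f ω ^ 4 := by positivity
    rcases le_or_gt (|f ω|) 1 with h | h
    · have h1 : |f ω| ^ k ≤ 1 := pow_le_one₀ (abs_nonneg _) h
      linarith
    · have h1 : |f ω| ^ k ≤ |f ω| ^ 4 := pow_le_pow_right₀ h.le hk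
      have h2 : |f ω| ^ 4 = f ω ^ 4 := by
        rw [← abs_pow, abs_of_nonneg h40]
      linarith
  exact ((integrable_const (1:ℝ)).add h4).mono' ((hf.pow_const k).aestronglyMeasurable)
    (Filter.Eventually.of_forall hb)

lemma my_fourth_moment_bound {ι : Type*} (Z : ι → Ω → ℝ)
    (hZm : ∀ a, Measurable (Z a))
    (hZind : iIndepFun Z Pr)
    (hZ4 : ∀ a, Integrable (fun ω => Z a ω ^ 4) Pr)
    (hZ0 : ∀ a, ∫ ω, Z a ω ∂Pr = 0) (s : Finset ι) :
    Integrable (fun ω => (∑ a ∈ s, Z a ω) ^ 4) Pr ∧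
    (∫ ω, ∑ a ∈ s, Z a ω ∂Pr) = 0 ∧
    (∫ ω, (∑ a ∈ s, Z a ω) ^ 2 ∂Pr) = ∑ a ∈ s, ∫ ω, Z a ω ^ 2 ∂Pr ∧
    (∫ ω, (∑ a ∈ s, Z a ω) ^ 4 ∂Pr) ≤
      ∑ a ∈ s, ∫ ω, Z a ω ^ 4 ∂Pr + 3 * (∑ a ∈ s, ∫ ω, Z a ω ^ 2 ∂Pr) ^ 2 := by
  classical
  induction s using Finset.induction_on with
  | empty => simp
  | @insert a s ha ih =>
    obtain ⟨ihInt, ihMean, ihVar, ihFour⟩ := ih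
    have hSm : Measurable (fun ω => ∑ b ∈ s, Z b ω) :=
      Finset.measurable_sum s (fun b _ => hZm b)
    have hIndep : IndepFun (Z a) (fun ω => ∑ b ∈ s, Z b ω) Pr := by
      have h := (hZind.indepFun_finsetSum_of_notMem hZm ha).symm
      have hfun : (∑ j ∈ s, Z j) = fun ω => ∑ j ∈ s, Z j ω := by
        funext ω; exact Finset.sum_apply ω s Z
      rwa [hfun] at h
    have hpow : ∀ k l : ℕ,
        IndepFun (fun ω => Z a ω ^ k) (fun ω => (∑ b ∈ s, Z b ω) ^ l) Pr := by
      intro k l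
      exact hIndep.comp (measurable_id.pow_const k) (measurable_id.pow_const l)
    have hZk : ∀ k, k ≤ 4 → Integrable (fun ω => Z a ω ^ k) Pr :=
      fun k hk => my_integrable_pow_le_four (hZm a) (hZ4 a) hk
    have hSk : ∀ l, l ≤ 4 → Integrable (fun ω => (∑ b ∈ s, Z b ω) ^ l) Pr :=
      fun l hl => my_integrable_pow_le_four hSm ihInt hl
    have hprod : ∀ k l, k ≤ 4 → l ≤ 4 →
        Integrable (fun ω => Z a ω ^ k * (∑ b ∈ s, Z b ω) ^ l) Pr :=
      fun k l hk hl => (hpow k l).integrable_mul (hZk k hk) (hSk l hl)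
    have hPI : ∀ k l, k ≤ 4 → l ≤ 4 →
        ∫ ω, Z a ω ^ k * (∑ b ∈ s, Z b ω) ^ l ∂Pr
          = (∫ ω, Z a ω ^ k ∂Pr) * ∫ ω, (∑ b ∈ s, Z b ω) ^ l ∂Pr :=
      fun k l hk hl => (hpow k l).integral_fun_mul_eq_mul_integral (hZk k hk).aestronglyMeasurable (hSk l hl).aestronglyMeasurable
    have hsum : ∀ ω : Ω, ∑ b ∈ insert a s, Z b ω = Z a ω + ∑ b ∈ s, Z b ω :=
      fun ω => Finset.sum_insert ha
    have hZ1 : ∫ ω, Z a ω ^ 1 ∂Pr = 0 := by simpa using hZ0 a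
    have hS1 : ∫ ω, (∑ b ∈ s, Z b ω) ^ 1 ∂Pr = 0 := by simpa using ihMean
    -- fourth power expansion
    have e4 : (fun ω => (∑ b ∈ insert a s, Z b ω) ^ 4)
        = fun ω => Z a ω ^ 4 + 4 * (Z a ω ^ 3 * (∑ b ∈ s, Z b ω) ^ 1)
            + 6 * (Z a ω ^ 2 * (∑ b ∈ s, Z b ω) ^ 2)
            + 4 * (Z a ω ^ 1 * (∑ b ∈ s, Z b ω) ^ 3) + (∑ b ∈ s, Z b ω) ^ 4 := by
      funext ω; rw [hsum ω]; ring
    have i1' : Integrable (fun ω => Z a ω ^ 4) Pr := hZk 4 le_rfl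
    have i2' : Integrable (fun ω => 4 * (Z a ω ^ 3 * (∑ b ∈ s, Z b ω) ^ 1)) Pr :=
      (hprod 3 1 (by norm_num) (by norm_num)).const_mul 4
    have i3' : Integrable (fun ω => 6 * (Z a ω ^ 2 * (∑ b ∈ s, Z b ω) ^ 2)) Pr :=
      (hprod 2 2 (by norm_num) (by norm_num)).const_mul 6
    have i4' : Integrable (fun ω => 4 * (Z a ω ^ 1 * (∑ b ∈ s, Z b ω) ^ 3)) Pr :=
      (hprod 1 3 (by norm_num) (by norm_num)).const_mul 4
    have i5' : Integrable (fun ω => (∑ b ∈ s, Z b ω) ^ 4) Pr := hSk 4 le_rfl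
    have i12 : Integrable (fun ω => Z a ω ^ 4 + 4 * (Z a ω ^ 3 * (∑ b ∈ s, Z b ω) ^ 1)) Pr :=
      i1'.add i2'
    have i123 : Integrable (fun ω => Z a ω ^ 4 + 4 * (Z a ω ^ 3 * (∑ b ∈ s, Z b ω) ^ 1)
        + 6 * (Z a ω ^ 2 * (∑ b ∈ s, Z b ω) ^ 2)) Pr := i12.add i3'
    have i1234 : Integrable (fun ω => Z a ω ^ 4 + 4 * (Z a ω ^ 3 * (∑ b ∈ s, Z b ω) ^ 1)
        + 6 * (Z a ω ^ 2 * (∑ b ∈ s, Z b ω) ^ 2)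
        + 4 * (Z a ω ^ 1 * (∑ b ∈ s, Z b ω) ^ 3)) Pr := i123.add i4'
    have int4 : Integrable (fun ω => (∑ b ∈ insert a s, Z b ω) ^ 4) Pr := by
      rw [e4]
      exact i1234.add i5'
    have i4 : ∫ ω, (∑ b ∈ insert a s, Z b ω) ^ 4 ∂Pr
        = (∫ ω, Z a ω ^ 4 ∂Pr)
          + 6 * ((∫ ω, Z a ω ^ 2 ∂Pr) * (∫ ω, (∑ b ∈ s, Z b ω) ^ 2 ∂Pr))
          + ∫ ω, (∑ b ∈ s, Z b ω) ^ 4 ∂Pr := by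
      rw [e4]
      rw [integral_add i1234 i5',
          integral_add i123 i4',
          integral_add i12 i3',
          integral_add i1' i2',
          integral_const_mul, integral_const_mul, integral_const_mul,
          hPI 3 1 (by norm_num) (by norm_num), hPI 2 2 (by norm_num) (by norm_num),
          hPI 1 3 (by norm_num) (by norm_num), hZ1, hS1]
      ring
    -- second power
    have e2 : (fun ω => (∑ b ∈ insert a s, Z b ω) ^ 2)
        = fun ω => Z a ω ^ 2 + 2 * (Z a ω ^ 1 * (∑ b ∈ s, Z b ω) ^ 1)
            + (∑ b ∈ s, Z b ω) ^ 2 := by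
      funext ω; rw [hsum ω]; ring
    have j1' : Integrable (fun ω => Z a ω ^ 2) Pr := hZk 2 (by norm_num)
    have j2' : Integrable (fun ω => 2 * (Z a ω ^ 1 * (∑ b ∈ s, Z b ω) ^ 1)) Pr :=
      (hprod 1 1 (by norm_num) (by norm_num)).const_mul 2
    have j3' : Integrable (fun ω => (∑ b ∈ s, Z b ω) ^ 2) Pr := hSk 2 (by norm_num)
    have j12 : Integrable (fun ω => Z a ω ^ 2 + 2 * (Z a ω ^ 1 * (∑ b ∈ s, Z b ω) ^ 1)) Pr :=
      j1'.add j2'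
    have i2 : ∫ ω, (∑ b ∈ insert a s, Z b ω) ^ 2 ∂Pr
        = (∫ ω, Z a ω ^ 2 ∂Pr) + ∫ ω, (∑ b ∈ s, Z b ω) ^ 2 ∂Pr := by
      rw [e2, integral_add j12 j3', integral_add j1' j2',
          integral_const_mul, hPI 1 1 (by norm_num) (by norm_num), hZ1]
      ring
    have i1 : ∫ ω, ∑ b ∈ insert a s, Z b ω ∂Pr = 0 := by
      have e1 : (fun ω => ∑ b ∈ insert a s, Z b ω)
          = fun ω => Z a ω + ∑ b ∈ s, Z b ω := funext hsum
      rw [e1, integral_add (by simpa using hZk 1 (by norm_num)) (by simpa using hSk 1 (by norm_num)),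
          hZ0 a, ihMean, add_zero]
    refine ⟨int4, i1, ?_, ?_⟩
    · rw [i2, Finset.sum_insert ha, ihVar]
    · rw [i4, Finset.sum_insert ha, Finset.sum_insert ha, ihVar]
      nlinarith [ihFour, sq_nonneg (∫ ω, Z a ω ^ 2 ∂Pr)]

end


lemma my_measurable_trunc (t : ℝ≥0∞) : Measurable (trunc t) := by
  have hm : Measurable fun v : ℝ => ENNReal.ofReal |v| :=
    ENNReal.measurable_ofReal.comp continuous_abs.measurable
  have hset : MeasurableSet {v : ℝ | ENNReal.ofReal |v| ≤ t} :=
    measurableSet_le hm measurable_const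
  unfold trunc
  exact Measurable.ite hset measurable_id measurable_const

lemma my_sq_eq_trunc_add_tail (t : ℝ≥0∞) (v : ℝ) :
    v ^ 2 = (trunc t v) ^ 2 + tailSq t v := by
  unfold trunc tailSq
  by_cases h : ENNReal.ofReal |v| ≤ t <;> simp [h]

lemma my_tailSq_nonneg (t : ℝ≥0∞) (v : ℝ) : 0 ≤ tailSq t v := by
  unfold tailSq
  by_cases h : ENNReal.ofReal |v| ≤ t <;> simp [h] <;> positivity

set_option maxHeartbeats 1000000 in
lemma my_single_n {Ω : Type*} [MeasurableSpace Ω] (Pr : Measure Ω) [IsProbabilityMeasure Pr]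
    {P N : ℕ} (hN : 1 ≤ N) (hP : 1 ≤ P)
    (x : Fin P → Fin N → Ω → ℝ) (t : ℝ≥0∞)
    (hmeas : ∀ i j, Measurable (x i j))
    (hind : iIndepFun (fun ij : Fin P × Fin N => x ij.1 ij.2) Pr)
    (hint : ∀ i j, ∀ m ∈ Finset.Icc 1 4,
      Integrable (fun ω => (trunc t (x i j ω)) ^ (2*m)) Pr)
    {C' : ℝ} (hC0 : 0 ≤ C')
    (hmom : ∀ i j, ∀ m ∈ Finset.Icc 1 4,
      (N:ℝ) * ∫ ω, (trunc t (x i j ω))^(2*m) ∂Pr ≤ C') :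
    Pr {ω | C' + 1 < (1/(P:ℝ)) * ∑ i, ∑ j, (trunc t (x i j ω))^2}
      ≤ ENNReal.ofReal ((8*C' + 8*C'^4 + 3*C'^2) / (P:ℝ)^2) := by
  have hNR : (0:ℝ) < N := by exact_mod_cast hN
  have hNR1 : (1:ℝ) ≤ N := by exact_mod_cast hN
  have hPR : (0:ℝ) < P := by exact_mod_cast hP
  have hPR1 : (1:ℝ) ≤ P := by exact_mod_cast hP
  have facts : ∀ (i : Fin P) (j : Fin N),
      Integrable (fun ω => ((trunc t (x i j ω))^2 - (∫ ω', (trunc t (x i j ω'))^2 ∂Pr))^4) Pr ∧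
      (∫ ω, ((trunc t (x i j ω))^2 - (∫ ω', (trunc t (x i j ω'))^2 ∂Pr)) ∂Pr) = 0 ∧
      (∫ ω, ((trunc t (x i j ω))^2 - (∫ ω', (trunc t (x i j ω'))^2 ∂Pr))^2 ∂Pr) ≤ C'/N ∧
      (∫ ω, ((trunc t (x i j ω))^2 - (∫ ω', (trunc t (x i j ω'))^2 ∂Pr))^4 ∂Pr)
        ≤ (8*C' + 8*C'^4)/N ∧
      (∫ ω', (trunc t (x i j ω'))^2 ∂Pr) ≤ C'/N := by
    intro i j
    have h2 : Integrable (fun ω => (trunc t (x i j ω))^2) Pr := by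
      simpa using hint i j 1 (by simp)
    have h4 : Integrable (fun ω => (trunc t (x i j ω))^4) Pr := by
      simpa using hint i j 2 (by simp)
    have h6 : Integrable (fun ω => (trunc t (x i j ω))^6) Pr := by
      simpa using hint i j 3 (by simp)
    have h8 : Integrable (fun ω => (trunc t (x i j ω))^8) Pr := by
      simpa using hint i j 4 (by simp)
    have hm2 : (N:ℝ) * ∫ ω, (trunc t (x i j ω))^2 ∂Pr ≤ C' := by
      simpa using hmom i j 1 (by simp)
    have hm4 : (N:ℝ) * ∫ ω, (trunc t (x i j ω))^4 ∂Pr ≤ C' := by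
      simpa using hmom i j 2 (by simp)
    have hm8 : (N:ℝ) * ∫ ω, (trunc t (x i j ω))^8 ∂Pr ≤ C' := by
      simpa using hmom i j 4 (by simp)
    set μv : ℝ := ∫ ω', (trunc t (x i j ω'))^2 ∂Pr with hμv
    have hμ0 : 0 ≤ μv := by
      rw [hμv]; exact integral_nonneg fun ω => sq_nonneg _
    have hμle : μv ≤ C'/N := by rw [le_div_iff₀ hNR]; linarith [hm2]
    have hY4 : ∫ ω, (trunc t (x i j ω))^4 ∂Pr ≤ C'/N := by
      rw [le_div_iff₀ hNR]; linarith [hm4]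
    have hY8 : ∫ ω, (trunc t (x i j ω))^8 ∂Pr ≤ C'/N := by
      rw [le_div_iff₀ hNR]; linarith [hm8]
    have e4 : (fun ω => ((trunc t (x i j ω))^2 - μv)^4)
        = fun ω => (((trunc t (x i j ω))^8 - (4*μv) * (trunc t (x i j ω))^6)
            + (6*μv^2) * (trunc t (x i j ω))^4
            - (4*μv^3) * (trunc t (x i j ω))^2) + μv^4 := by
      funext ω; ring
    have hZ4int : Integrable (fun ω => ((trunc t (x i j ω))^2 - μv)^4) Pr := by
      rw [e4]
      exact (((h8.sub (h6.const_mul (4*μv))).add (h4.const_mul (6*μv^2))).sub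
        (h2.const_mul (4*μv^3))).add (integrable_const (μv^4))
    have hZ0 : (∫ ω, ((trunc t (x i j ω))^2 - μv) ∂Pr) = 0 := by
      rw [integral_sub h2 (integrable_const μv), integral_const, ← hμv]
      simp
    have hZ2le : (∫ ω, ((trunc t (x i j ω))^2 - μv)^2 ∂Pr) ≤ C'/N := by
      have e2 : (fun ω => ((trunc t (x i j ω))^2 - μv)^2)
          = fun ω => ((trunc t (x i j ω))^4 - (2*μv) * (trunc t (x i j ω))^2) + μv^2 := by
        funext ω; ring
      have kint : Integrable (fun ω => (trunc t (x i j ω))^4 - (2*μv) * (trunc t (x i j ω))^2) Pr :=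
        h4.sub (h2.const_mul (2*μv))
      rw [e2, integral_add kint (integrable_const _),
          integral_sub h4 (h2.const_mul (2*μv)), integral_const_mul, integral_const, ← hμv]
      simp only [probReal_univ, measure_univ, ENNReal.toReal_one, smul_eq_mul, one_mul]
      nlinarith [hY4, sq_nonneg μv]
    have hZ4le : (∫ ω, ((trunc t (x i j ω))^2 - μv)^4 ∂Pr) ≤ (8*C' + 8*C'^4)/N := by
      have hb : ∀ ω, ((trunc t (x i j ω))^2 - μv)^4 ≤ 8*(trunc t (x i j ω))^8 + 8*μv^4 := by
        intro ω
        nlinarith [my_sub_pow_four_le ((trunc t (x i j ω))^2) μv]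
      have hmono : (∫ ω, ((trunc t (x i j ω))^2 - μv)^4 ∂Pr)
          ≤ ∫ ω, (8*(trunc t (x i j ω))^8 + 8*μv^4) ∂Pr :=
        integral_mono hZ4int ((h8.const_mul 8).add (integrable_const _)) hb
      have heq : (∫ ω, (8*(trunc t (x i j ω))^8 + 8*μv^4) ∂Pr)
          = 8 * (∫ ω, (trunc t (x i j ω))^8 ∂Pr) + 8*μv^4 := by
        rw [integral_add (h8.const_mul 8) (integrable_const _), integral_const_mul, integral_const]
        simp
      have hμ4 : μv^4 ≤ (C'/N)^4 := pow_le_pow_left₀ hμ0 hμle 4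
      have hC4 : (C'/N)^4 ≤ C'^4/N := by
        rw [div_pow]
        refine div_le_div_of_nonneg_left (by positivity) hNR ?_
        calc (N:ℝ) = (N:ℝ)^1 := (pow_one _).symm
          _ ≤ (N:ℝ)^4 := pow_le_pow_right₀ hNR1 (by norm_num)
      have hsplit : (8*C' + 8*C'^4)/(N:ℝ) = 8*(C'/N) + 8*(C'^4/N) := by ring
      rw [hsplit]
      linarith [hmono, heq, hY8, hμ4, hC4]
    exact ⟨hZ4int, hZ0, hZ2le, hZ4le, hμle⟩
  set K : ℝ := 8*C' + 8*C'^4 with hK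
  have hK0 : 0 ≤ K := by rw [hK]; positivity
  set Z : Fin P × Fin N → Ω → ℝ := fun ij =>
    (fun v => (trunc t v)^2 - (∫ ω', (trunc t (x ij.1 ij.2 ω'))^2 ∂Pr)) ∘ (x ij.1 ij.2)
    with hZdef
  obtain ⟨hTint, hTmean, hTvar, hTfour⟩ :=
    my_fourth_moment_bound (Pr := Pr) Z
      (fun ij => (((my_measurable_trunc t).pow_const 2).sub_const _).comp (hmeas ij.1 ij.2))
      (hind.comp _ (fun ij => ((my_measurable_trunc t).pow_const 2).sub_const _))
      (fun ij => (facts ij.1 ij.2).1)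
      (fun ij => (facts ij.1 ij.2).2.1)
      Finset.univ
  have hvar0 : (0:ℝ) ≤ ∑ ij : Fin P × Fin N, ∫ ω, Z ij ω^2 ∂Pr :=
    Finset.sum_nonneg fun ij _ => integral_nonneg fun ω => sq_nonneg _
  have hcard : ((Finset.univ : Finset (Fin P × Fin N)).card : ℝ) = (P:ℝ) * N := by
    rw [Finset.card_univ, Fintype.card_prod, Fintype.card_fin, Fintype.card_fin]
    push_cast; ring
  have hG2 : ∑ ij : Fin P × Fin N, ∫ ω, Z ij ω^2 ∂Pr ≤ (P:ℝ) * C' := by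
    calc ∑ ij : Fin P × Fin N, ∫ ω, Z ij ω^2 ∂Pr
        ≤ ∑ _ij : Fin P × Fin N, C'/(N:ℝ) :=
          Finset.sum_le_sum fun ij _ => (facts ij.1 ij.2).2.2.1
      _ = ((Finset.univ : Finset (Fin P × Fin N)).card : ℝ) * (C'/N) := by
          rw [Finset.sum_const, nsmul_eq_mul]
      _ = (P:ℝ) * C' := by rw [hcard]; field_simp
  have hG4 : ∑ ij : Fin P × Fin N, ∫ ω, Z ij ω^4 ∂Pr ≤ (P:ℝ) * K := by
    calc ∑ ij : Fin P × Fin N, ∫ ω, Z ij ω^4 ∂Pr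
        ≤ ∑ _ij : Fin P × Fin N, K/(N:ℝ) :=
          Finset.sum_le_sum fun ij _ => (facts ij.1 ij.2).2.2.2.1
      _ = ((Finset.univ : Finset (Fin P × Fin N)).card : ℝ) * (K/N) := by
          rw [Finset.sum_const, nsmul_eq_mul]
      _ = (P:ℝ) * K := by rw [hcard]; field_simp
  have hT4 : ∫ ω, (∑ ij : Fin P × Fin N, Z ij ω)^4 ∂Pr ≤ (P:ℝ)*K + 3*((P:ℝ)*C')^2 := by
    refine le_trans hTfour ?_
    have h1 : (∑ ij : Fin P × Fin N, ∫ ω, Z ij ω^2 ∂Pr)^2 ≤ ((P:ℝ)*C')^2 :=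
      pow_le_pow_left₀ hvar0 hG2 2
    nlinarith [hG4, h1]
  have hfeq : (fun ω => ((1/(P:ℝ)) * ∑ ij : Fin P × Fin N, Z ij ω)^4)
      = fun ω => (1/(P:ℝ))^4 * (∑ ij : Fin P × Fin N, Z ij ω)^4 := by
    funext ω; ring
  have hfint : Integrable (fun ω => ((1/(P:ℝ)) * ∑ ij : Fin P × Fin N, Z ij ω)^4) Pr := by
    rw [hfeq]; exact hTint.const_mul _
  have hMarkov := mul_meas_ge_le_integral_of_nonneg
    (ae_of_all Pr (fun ω => by positivity :
      ∀ ω, (0:Ω → ℝ) ω ≤ ((1/(P:ℝ)) * ∑ ij : Fin P × Fin N, Z ij ω)^4)) hfint 1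
  have hIf : ∫ ω, ((1/(P:ℝ)) * ∑ ij : Fin P × Fin N, Z ij ω)^4 ∂Pr
      ≤ (K + 3*C'^2)/(P:ℝ)^2 := by
    rw [hfeq, integral_const_mul]
    have e : (1/(P:ℝ))^4 * ((P:ℝ)*K + 3*((P:ℝ)*C')^2) = K/(P:ℝ)^3 + 3*C'^2/(P:ℝ)^2 := by
      field_simp
    have h2 : K/(P:ℝ)^3 ≤ K/(P:ℝ)^2 := by
      refine div_le_div_of_nonneg_left hK0 (by positivity) ?_
      nlinarith [hPR1, hPR]
    have h3 : (K + 3*C'^2)/(P:ℝ)^2 = K/(P:ℝ)^2 + 3*C'^2/(P:ℝ)^2 := by ring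
    have h4 : (1/(P:ℝ))^4 * ∫ ω, (∑ ij : Fin P × Fin N, Z ij ω)^4 ∂Pr
        ≤ (1/(P:ℝ))^4 * ((P:ℝ)*K + 3*((P:ℝ)*C')^2) :=
      mul_le_mul_of_nonneg_left hT4 (by positivity)
    linarith [h4, e ▸ h4]
  have hμsum : ∑ i : Fin P, ∑ j : Fin N, (∫ ω', (trunc t (x i j ω'))^2 ∂Pr) ≤ (P:ℝ) * C' := by
    calc ∑ i : Fin P, ∑ j : Fin N, (∫ ω', (trunc t (x i j ω'))^2 ∂Pr)
        ≤ ∑ _i : Fin P, ∑ _j : Fin N, C'/(N:ℝ) :=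
          Finset.sum_le_sum fun i _ => Finset.sum_le_sum fun j _ => (facts i j).2.2.2.2
      _ = (P:ℝ) * ((N:ℝ) * (C'/N)) := by
          rw [Finset.sum_const, Finset.sum_const, Finset.card_univ, Finset.card_univ,
            Fintype.card_fin, Fintype.card_fin, nsmul_eq_mul, nsmul_eq_mul]
      _ = (P:ℝ) * C' := by field_simp
  have hTdecomp : ∀ ω, ∑ ij : Fin P × Fin N, Z ij ω
      = (∑ i : Fin P, ∑ j : Fin N, (trunc t (x i j ω))^2)
        - ∑ i : Fin P, ∑ j : Fin N, (∫ ω', (trunc t (x i j ω'))^2 ∂Pr) := by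
    intro ω
    rw [Fintype.sum_prod_type, ← Finset.sum_sub_distrib]
    refine Finset.sum_congr rfl fun i _ => ?_
    rw [← Finset.sum_sub_distrib]
    refine Finset.sum_congr rfl fun j _ => ?_
    simp [hZdef, Function.comp]
  have hsub : {ω | C' + 1 < (1/(P:ℝ)) * ∑ i : Fin P, ∑ j : Fin N, (trunc t (x i j ω))^2}
      ⊆ {ω | 1 ≤ ((1/(P:ℝ)) * ∑ ij : Fin P × Fin N, Z ij ω)^4} := by
    intro ω hω
    simp only [Set.mem_setOf_eq] at hω ⊢
    have h1 : (1/(P:ℝ)) * ∑ i : Fin P, ∑ j : Fin N, (trunc t (x i j ω))^2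
        = (1/(P:ℝ)) * (∑ i : Fin P, ∑ j : Fin N, (∫ ω', (trunc t (x i j ω'))^2 ∂Pr))
          + (1/(P:ℝ)) * ∑ ij : Fin P × Fin N, Z ij ω := by
      rw [hTdecomp ω]; ring
    have h2 : (1/(P:ℝ)) * (∑ i : Fin P, ∑ j : Fin N, (∫ ω', (trunc t (x i j ω'))^2 ∂Pr))
        ≤ (1/(P:ℝ)) * ((P:ℝ) * C') :=
      mul_le_mul_of_nonneg_left hμsum (by positivity)
    have h2' : (1/(P:ℝ)) * ((P:ℝ) * C') = C' := by field_simp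
    have h3 : 1 ≤ (1/(P:ℝ)) * ∑ ij : Fin P × Fin N, Z ij ω := by linarith
    calc (1:ℝ) = 1^4 := by norm_num
      _ ≤ ((1/(P:ℝ)) * ∑ ij : Fin P × Fin N, Z ij ω)^4 :=
        pow_le_pow_left₀ (by norm_num) h3 4
  calc Pr {ω | C' + 1 < (1/(P:ℝ)) * ∑ i : Fin P, ∑ j : Fin N, (trunc t (x i j ω))^2}
      ≤ Pr {ω | 1 ≤ ((1/(P:ℝ)) * ∑ ij : Fin P × Fin N, Z ij ω)^4} := measure_mono hsub
    _ ≤ ENNReal.ofReal ((K + 3*C'^2)/(P:ℝ)^2) := by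
        rw [one_mul] at hMarkov
        have h := ENNReal.ofReal_le_ofReal (le_trans hMarkov hIf)
        rwa [measureReal_def, ENNReal.ofReal_toReal (measure_ne_top Pr _)] at h


set_option maxHeartbeats 1000000 in
/-- Appendix lemma (ii): if additionally
`(1/p) Σ_{i,j} x_{ij}² 1{|x_{ij}| > t_n} → 0` a.s. (resp. in probability), then
`limsup (1/p) Σ_{i,j} x_{ij}² < ∞` a.s. (resp. the sums are bounded in probability). -/
theorem avg_squares_limsup_finite
    {Ω : Type*} [MeasurableSpace Ω] (Pr : Measure Ω) (hPr : IsProbabilityMeasure Pr)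
    (p : ℕ → ℕ) (y : ℝ) (hy : 0 < y)
    (hp : Tendsto (fun n : ℕ => (p n : ℝ) / (n : ℝ)) atTop (𝓝 y))
    (x : (n : ℕ) → Fin (p n) → Fin n → Ω → ℝ) (t : ℕ → ℝ≥0∞)
    (hmeas : ∀ n i j, Measurable (x n i j))
    (hind : ∀ n, iIndepFun
      (fun ij : Fin (p n) × Fin n => x n ij.1 ij.2) Pr)
    (hint : ∀ n i j, ∀ m ∈ Finset.Icc 1 4,
      Integrable (fun ω => (trunc (t n) (x n i j ω)) ^ (2 * m)) Pr)
    (C : ℝ)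
    (hmom : ∀ (n : ℕ) (i : Fin (p n)) (j : Fin n), ∀ m ∈ Finset.Icc 1 4,
      (n : ℝ) * ∫ ω, (trunc (t n) (x n i j ω)) ^ (2 * m) ∂Pr ≤ C) :
    -- almost sure version
    ((∀ᵐ ω ∂Pr, Tendsto
        (fun n : ℕ => (1 / (p n : ℝ)) * ∑ i : Fin (p n), ∑ j : Fin n,
          tailSq (t n) (x n i j ω)) atTop (𝓝 0)) →
      ∀ᵐ ω ∂Pr, ∃ D : ℝ, ∀ᶠ n : ℕ in atTop,
        (1 / (p n : ℝ)) * ∑ i : Fin (p n), ∑ j : Fin n, (x n i j ω) ^ 2 ≤ D) ∧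
    -- in-probability version
    ((∀ ε : ℝ, 0 < ε → Tendsto
        (fun n : ℕ => Pr {ω | ε ≤ |(1 / (p n : ℝ)) * ∑ i : Fin (p n), ∑ j : Fin n,
          tailSq (t n) (x n i j ω)|}) atTop (𝓝 0)) →
      ∀ ε : ℝ, 0 < ε → ∃ D : ℝ, ∀ᶠ n : ℕ in atTop,
        Pr {ω | D < (1 / (p n : ℝ)) * ∑ i : Fin (p n), ∑ j : Fin n, (x n i j ω) ^ 2}
          ≤ ENNReal.ofReal ε) := by


  classical
  have _inst : IsProbabilityMeasure Pr := hPr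
  set C' : ℝ := max C 0 with hC'
  have hC0 : (0:ℝ) ≤ C' := le_max_right _ _
  set c : ℝ := (8*C' + 8*C'^4 + 3*C'^2) * (2/y)^2 with hc
  have hc0 : 0 ≤ c := by rw [hc]; positivity
  -- the eventual regularity regime
  obtain ⟨N₁, hN₁⟩ := eventually_atTop.mp (hp.eventually (eventually_gt_nhds (by linarith : y/2 < y)))
  set N₀ : ℕ := max N₁ 1 with hN₀
  have hN₀1 : 1 ≤ N₀ := le_max_right _ _
  have hreg : ∀ n, N₀ ≤ n → 1 ≤ n ∧ 1 ≤ p n ∧ (y/2) * n ≤ (p n : ℝ) := by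
    intro n hn
    have h1 : 1 ≤ n := le_trans (le_max_right _ _) hn
    have hnR : (0:ℝ) < n := by exact_mod_cast h1
    have h2 : y/2 < (p n : ℝ)/n := hN₁ n (le_trans (le_max_left _ _) hn)
    have h3 : (y/2) * n < (p n : ℝ) := by
      have := (lt_div_iff₀ hnR).mp h2
      linarith
    have h4 : 1 ≤ p n := by
      by_contra h
      push_neg at h
      interval_cases hpn : p n
      · simp at h3
        nlinarith
    exact ⟨h1, h4, h3.le⟩
  -- the key probability bound
  set A : ℕ → Set Ω := fun n =>
    {ω | C' + 1 < (1/(p n : ℝ)) * ∑ i : Fin (p n), ∑ j : Fin n, (trunc (t n) (x n i j ω))^2}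
    with hA_def
  have hA : ∀ n, N₀ ≤ n → Pr (A n) ≤ ENNReal.ofReal (c / (n:ℝ)^2) := by
    intro n hn
    obtain ⟨h1, h2, h3⟩ := hreg n hn
    have hmom' : ∀ (i : Fin (p n)) (j : Fin n), ∀ m ∈ Finset.Icc 1 4,
        (n : ℝ) * ∫ ω, (trunc (t n) (x n i j ω)) ^ (2 * m) ∂Pr ≤ C' :=
      fun i j m hm => le_trans (hmom n i j m hm) (le_max_left _ _)
    have hb := my_single_n Pr h1 h2 (x n) (t n) (hmeas n) (hind n) (hint n) hC0 hmom'
    refine le_trans hb (ENNReal.ofReal_le_ofReal ?_)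
    have hPR1 : (1:ℝ) ≤ (p n : ℝ) := by exact_mod_cast h2
    have hnR : (0:ℝ) < n := by exact_mod_cast h1
    rw [div_le_div_iff₀ (by positivity) (by positivity)]
    have h5 : ((y/2) * n)^2 ≤ (p n : ℝ)^2 := pow_le_pow_left₀ (by positivity) h3 2
    have h6 : (2/y)^2 * ((y/2) * (n:ℝ))^2 = (n:ℝ)^2 := by
      field_simp
    have h7 : (8*C' + 8*C'^4 + 3*C'^2) * ((2/y)^2 * ((y/2) * (n:ℝ))^2)
        ≤ (8*C' + 8*C'^4 + 3*C'^2) * ((2/y)^2 * (p n : ℝ)^2) := by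
      apply mul_le_mul_of_nonneg_left _ (by positivity)
      exact mul_le_mul_of_nonneg_left h5 (by positivity)
    calc (8*C' + 8*C'^4 + 3*C'^2) * (n:ℝ)^2
        = (8*C' + 8*C'^4 + 3*C'^2) * ((2/y)^2 * ((y/2) * (n:ℝ))^2) := by rw [h6]
      _ ≤ (8*C' + 8*C'^4 + 3*C'^2) * ((2/y)^2 * (p n : ℝ)^2) := h7
      _ = c * (p n : ℝ)^2 := by rw [hc]; ring
  -- Borel–Cantelli for the shifted sequence
  have hBC : ∀ᵐ ω ∂Pr, ∀ᶠ m in atTop, ω ∉ A (m + N₀) := by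
    apply ae_eventually_notMem
    have hsummable : Summable (fun m : ℕ => c / ((m:ℝ)+1)^2) := by
      have h1 : Summable (fun n : ℕ => 1 / (n:ℝ)^2) :=
        Real.summable_one_div_nat_pow.mpr (by norm_num)
      have h2 : Summable (fun m : ℕ => 1 / (((m+1 : ℕ)):ℝ)^2) :=
        (summable_nat_add_iff 1).mpr h1
      refine Summable.congr (h2.mul_left c) ?_
      intro m
      push_cast
      ring
    have hb : ∀ m : ℕ, Pr (A (m + N₀)) ≤ ENNReal.ofReal (c / ((m:ℝ)+1)^2) := by
      intro m
      refine le_trans (hA (m + N₀) (by omega)) (ENNReal.ofReal_le_ofReal ?_)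
      have h1 : ((m:ℝ)+1) ≤ ((m + N₀ : ℕ) : ℝ) := by
        push_cast
        have : (1:ℝ) ≤ (N₀ : ℝ) := by exact_mod_cast hN₀1
        linarith
      have h2 : ((m:ℝ)+1)^2 ≤ ((m + N₀ : ℕ) : ℝ)^2 := pow_le_pow_left₀ (by positivity) h1 2
      exact div_le_div_of_nonneg_left hc0 (by positivity) h2
    refine ne_of_lt (lt_of_le_of_lt (ENNReal.tsum_le_tsum hb) ?_)
    rw [← ENNReal.ofReal_tsum_of_nonneg (fun m => by positivity) hsummable]
    exact ENNReal.ofReal_lt_top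
  -- decomposition of the sums
  have hdec : ∀ n ω, (1/(p n : ℝ)) * ∑ i : Fin (p n), ∑ j : Fin n, (x n i j ω)^2
      = (1/(p n : ℝ)) * (∑ i : Fin (p n), ∑ j : Fin n, (trunc (t n) (x n i j ω))^2)
        + (1/(p n : ℝ)) * ∑ i : Fin (p n), ∑ j : Fin n, tailSq (t n) (x n i j ω) := by
    intro n ω
    rw [← mul_add]
    congr 1
    rw [← Finset.sum_add_distrib]
    refine Finset.sum_congr rfl fun i _ => ?_
    rw [← Finset.sum_add_distrib]
    refine Finset.sum_congr rfl fun j _ => ?_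
    exact my_sq_eq_trunc_add_tail (t n) (x n i j ω)
  have htail_nonneg : ∀ n ω,
      0 ≤ (1/(p n : ℝ)) * ∑ i : Fin (p n), ∑ j : Fin n, tailSq (t n) (x n i j ω) := by
    intro n ω
    apply mul_nonneg (by positivity)
    exact Finset.sum_nonneg fun i _ => Finset.sum_nonneg fun j _ => my_tailSq_nonneg _ _
  constructor
  · -- almost sure version
    intro hTail
    filter_upwards [hTail, hBC] with ω hω hωBC
    refine ⟨C' + 2, ?_⟩
    obtain ⟨m₀, hm₀⟩ := eventually_atTop.mp hωBC
    obtain ⟨n₁, hn₁⟩ := eventually_atTop.mp (hω.eventually_lt_const one_pos)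
    rw [eventually_atTop]
    refine ⟨max (m₀ + N₀) n₁, fun n hn => ?_⟩
    have hge1 : m₀ + N₀ ≤ n := le_trans (le_max_left _ _) hn
    have hnA : ω ∉ A n := by
      have h : n = (n - N₀) + N₀ := by omega
      rw [h]
      exact hm₀ _ (by omega)
    have htr : (1/(p n : ℝ)) * ∑ i : Fin (p n), ∑ j : Fin n, (trunc (t n) (x n i j ω))^2
        ≤ C' + 1 := by
      rw [hA_def] at hnA
      exact not_lt.mp hnA
    have htl : (1/(p n : ℝ)) * ∑ i : Fin (p n), ∑ j : Fin n, tailSq (t n) (x n i j ω) < 1 :=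
      hn₁ n (le_trans (le_max_right _ _) hn)
    rw [hdec n ω]
    linarith
  · -- in probability version
    intro hTailP ε hε
    refine ⟨C' + 2, ?_⟩
    have h1 : ∀ᶠ n in atTop,
        Pr {ω | 1 ≤ |(1/(p n : ℝ)) * ∑ i : Fin (p n), ∑ j : Fin n,
          tailSq (t n) (x n i j ω)|} ≤ ENNReal.ofReal (ε/2) :=
      (hTailP 1 one_pos).eventually_le_const
        (by simp only [ENNReal.ofReal_pos]; linarith)
    have h2 : ∀ᶠ n : ℕ in atTop, ENNReal.ofReal (c / (n:ℝ)^2) ≤ ENNReal.ofReal (ε/2) := by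
      have hto : Tendsto (fun n : ℕ => c / (n:ℝ)^2) atTop (𝓝 0) := by
        apply Tendsto.div_atTop tendsto_const_nhds
        exact (tendsto_pow_atTop (by norm_num : (2:ℕ) ≠ 0)).comp
          (tendsto_natCast_atTop_atTop (R := ℝ))
      exact (hto.eventually_le_const (by linarith : (0:ℝ) < ε/2)).mono
        fun n hn => ENNReal.ofReal_le_ofReal hn
    filter_upwards [h1, h2, eventually_ge_atTop N₀] with n hn1 hn2 hn3
    have hsub : {ω | C' + 2 < (1/(p n : ℝ)) * ∑ i : Fin (p n), ∑ j : Fin n, (x n i j ω)^2}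
        ⊆ A n ∪ {ω | 1 ≤ |(1/(p n : ℝ)) * ∑ i : Fin (p n), ∑ j : Fin n,
            tailSq (t n) (x n i j ω)|} := by
      intro ω hω
      by_contra hcon
      simp only [Set.mem_union, not_or] at hcon
      obtain ⟨hc1, hc2⟩ := hcon
      rw [hA_def] at hc1
      have htr : (1/(p n : ℝ)) * ∑ i : Fin (p n), ∑ j : Fin n, (trunc (t n) (x n i j ω))^2
          ≤ C' + 1 := not_lt.mp hc1
      have htl : (1/(p n : ℝ)) * ∑ i : Fin (p n), ∑ j : Fin n, tailSq (t n) (x n i j ω) < 1 := by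
        have hc2' : ¬ (1 ≤ |(1/(p n : ℝ)) * ∑ i : Fin (p n), ∑ j : Fin n,
            tailSq (t n) (x n i j ω)|) := hc2
        have h := not_le.mp hc2'
        calc (1/(p n : ℝ)) * ∑ i : Fin (p n), ∑ j : Fin n, tailSq (t n) (x n i j ω)
            ≤ |(1/(p n : ℝ)) * ∑ i : Fin (p n), ∑ j : Fin n, tailSq (t n) (x n i j ω)| :=
              le_abs_self _
          _ < 1 := h
      have hω' : C' + 2 < (1/(p n : ℝ)) * ∑ i : Fin (p n), ∑ j : Fin n, (x n i j ω)^2 := hω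
      rw [hdec n ω] at hω'
      linarith
    calc Pr {ω | C' + 2 < (1/(p n : ℝ)) * ∑ i : Fin (p n), ∑ j : Fin n, (x n i j ω)^2}
        ≤ Pr (A n ∪ _) := measure_mono hsub
      _ ≤ Pr (A n) + Pr {ω | 1 ≤ |(1/(p n : ℝ)) * ∑ i : Fin (p n), ∑ j : Fin n,
            tailSq (t n) (x n i j ω)|} := measure_union_le _ _
      _ ≤ ENNReal.ofReal (ε/2) + ENNReal.ofReal (ε/2) :=
          add_le_add (le_trans (hA n hn3) hn2) hn1
      _ = ENNReal.ofReal ε := by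
          rw [← ENNReal.ofReal_add (by linarith) (by linarith)]
          norm_num
end

section
/- For every k ≥ 1, the set of special symmetric pair-partitions of {1,…,2k} equals the set of non-crossing pair-partitions of {1,…,2k}; that is, SS(2k) ∩ P₂(2k) = NC₂(2k). -/
open MeasureTheory ProbabilityTheory Filter Topology Matrix
open scoped ENNReal NNReal BigOperators Classical

section Helpers

lemma pair_exists {B : Finset ℕ} (h : B.card = 2) : ∃ a b : ℕ, a < b ∧ B = {a, b} := by
  obtain ⟨a, b, hne, rfl⟩ := Finset.card_eq_two.mp h
  rcases lt_or_gt_of_ne hne with h' | h'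
  · exact ⟨a, b, h', rfl⟩
  · exact ⟨b, a, h', by ext x; simp [or_comm]⟩

lemma block_eq_of_mem {k : ℕ} {P : Finset (Finset ℕ)} (hP : IsPart (2 * k) P)
    {B C : Finset ℕ} (hB : B ∈ P) (hC : C ∈ P)
    {x : ℕ} (hxB : x ∈ B) (hxC : x ∈ C) : B = C := by
  by_contra hne
  exact Finset.disjoint_left.mp (hP.2.2.1 B hB C hC hne) hxB hxC

lemma crossFalse {P : Finset (Finset ℕ)} (hNC : NonCrossing P) {a b c d : ℕ}
    {B C : Finset ℕ} (h1 : a < b) (h2 : b < c) (h3 : c < d)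
    (hB : B ∈ P) (hC : C ∈ P) (hne : B ≠ C)
    (ha : a ∈ B) (hc : c ∈ B) (hb : b ∈ C) (hd : d ∈ C) : False :=
  hNC ⟨a, b, c, d, h1, h2, h3, B, hB, C, hC, hne, ha, hc, hb, hd⟩

lemma min_pair {a b : ℕ} (h : a < b) : ({a, b} : Finset ℕ).min = (a : WithBot ℕ) := by
  rw [show ({a, b} : Finset ℕ) = insert a {b} from rfl, Finset.min_insert,
    Finset.min_singleton]
  exact min_eq_left (by exact_mod_cast h.le)

lemma ioo_even {k : ℕ} {P : Finset (Finset ℕ)} (hP : IsPart (2 * k) P)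
    (hpair : ∀ B ∈ P, B.card = 2) (hNC : NonCrossing P) {a b : ℕ} (hab : a < b)
    (hB : ({a, b} : Finset ℕ) ∈ P) : Even (b - a - 1) := by
  have ha1 : 1 ≤ a := by
    have := hP.2.1 _ hB (show a ∈ ({a, b} : Finset ℕ) by simp)
    exact (Finset.mem_Icc.mp this).1
  have hb2 : b ≤ 2 * k := by
    have := hP.2.1 _ hB (show b ∈ ({a, b} : Finset ℕ) by simp)
    exact (Finset.mem_Icc.mp this).2
  set Q := P.filter (fun C => C ⊆ Finset.Ioo a b) with hQ
  have hcover : Finset.Ioo a b = Q.biUnion id := by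
    ext x
    simp only [Finset.mem_biUnion, id]
    constructor
    · intro hx
      have hx' := Finset.mem_Ioo.mp hx
      obtain ⟨C, hC, hxC⟩ := hP.2.2.2 x (Finset.mem_Icc.mpr ⟨by omega, by omega⟩)
      have hCne : C ≠ ({a, b} : Finset ℕ) := by
        rintro rfl
        simp only [Finset.mem_insert, Finset.mem_singleton] at hxC
        omega
      refine ⟨C, Finset.mem_filter.mpr ⟨hC, ?_⟩, hxC⟩
      intro y hyC
      rw [Finset.mem_Ioo]
      by_contra hy
      have hyne : y ≠ a ∧ y ≠ b := by
        constructor <;> rintro rfl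
        · exact hCne (block_eq_of_mem hP hC hB hyC (by simp))
        · exact hCne (block_eq_of_mem hP hC hB hyC (by simp))
      rcases (by omega : y < a ∨ b < y) with h | h
      · exact crossFalse hNC h hx'.1 hx'.2 hC hB hCne hyC hxC (by simp) (by simp)
      · exact crossFalse hNC hx'.1 hx'.2 h hB hC hCne.symm (by simp) (by simp) hxC hyC
    · rintro ⟨C, hC, hxC⟩
      exact (Finset.mem_filter.mp hC).2 hxC
  have hdisj : ∀ x ∈ Q, ∀ y ∈ Q, x ≠ y → Disjoint (id x) (id y) := by
    intro x hx y hy hne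
    exact hP.2.2.1 x (Finset.mem_filter.mp hx).1 y (Finset.mem_filter.mp hy).1 hne
  have hcard : (Finset.Ioo a b).card = 2 * Q.card := by
    rw [hcover, Finset.card_biUnion hdisj]
    rw [Finset.sum_congr rfl (fun C hC => (show (id C).card = 2 from hpair C (Finset.mem_filter.mp hC).1))]
    rw [Finset.sum_const, smul_eq_mul, mul_comm]
  rw [Nat.card_Ioo] at hcard
  exact ⟨Q.card, by omega⟩

end Helpers

/-- the special symmetric pair-partitions of `{1,…,2k}` are exactly the
non-crossing pair-partitions: `SS(2k) ∩ P₂(2k) = NC₂(2k)`. -/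
theorem specialSymmetric_pair_iff_nonCrossing_pair
    (k : ℕ) (hk : 1 ≤ k) (P : Finset (Finset ℕ)) :
    (SpecialSymmetric k P ∧ ∀ B ∈ P, B.card = 2) ↔
      (IsPart (2 * k) P ∧ (∀ B ∈ P, B.card = 2) ∧ NonCrossing P) := by
  constructor
  · rintro ⟨⟨hpart, _hruns, hsym⟩, hpair⟩
    refine ⟨hpart, hpair, ?_⟩
    rintro ⟨a, b, c, d, hab, hbc, hcd, B, hB, C, hC, hne, haB, hcB, hbC, hdC⟩
    have hac : a < c := hab.trans hbc
    have hBe : B = {a, c} := by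
      obtain ⟨x, y, hxy, rfl⟩ := pair_exists (hpair B hB)
      simp only [Finset.mem_insert, Finset.mem_singleton] at haB hcB
      have hx : a = x ∧ c = y := by omega
      rw [hx.1, hx.2]
    have hCe : C = {b, d} := by
      obtain ⟨x, y, hxy, rfl⟩ := pair_exists (hpair C hC)
      simp only [Finset.mem_insert, Finset.mem_singleton] at hbC hdC
      have hx : b = x ∧ d = y := by omega
      rw [hx.1, hx.2]
    have hgap : ∀ x ∈ B, ¬(a < x ∧ x < c) := by
      intro x hx
      rw [hBe] at hx
      simp only [Finset.mem_insert, Finset.mem_singleton] at hx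
      omega
    have hcards := hsym B hB C hC hne a (by simp [hBe]) c (by simp [hBe]) hac hgap
    rcases Nat.even_or_odd b with hbp | hbp
    · have hb2 : b % 2 = 0 := Nat.even_iff.mp hbp
      have e1 : C.filter (fun w => a < w ∧ w < c ∧ Odd w) = ∅ := by
        ext x
        simp only [Finset.mem_filter, hCe, Finset.mem_insert, Finset.mem_singleton,
          Nat.odd_iff, Finset.notMem_empty, iff_false]
        omega
      have e2 : C.filter (fun w => a < w ∧ w < c ∧ Even w) = {b} := by
        ext x
        simp only [Finset.mem_filter, hCe, Finset.mem_insert, Finset.mem_singleton,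
          Nat.even_iff]
        omega
      rw [e1, e2] at hcards
      simp at hcards
    · have hb2 : b % 2 = 1 := Nat.odd_iff.mp hbp
      have e1 : C.filter (fun w => a < w ∧ w < c ∧ Odd w) = {b} := by
        ext x
        simp only [Finset.mem_filter, hCe, Finset.mem_insert, Finset.mem_singleton,
          Nat.odd_iff]
        omega
      have e2 : C.filter (fun w => a < w ∧ w < c ∧ Even w) = ∅ := by
        ext x
        simp only [Finset.mem_filter, hCe, Finset.mem_insert, Finset.mem_singleton,
          Nat.even_iff, Finset.notMem_empty, iff_false]
        omega
      rw [e1, e2] at hcards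
      simp at hcards
  · rintro ⟨hpart, hpair, hNC⟩
    refine ⟨⟨hpart, ?_, ?_⟩, hpair⟩
    · -- EvenRuns for the block with maximal min
      intro B hB hmax
      obtain ⟨u, w, huw, hBe⟩ := pair_exists (hpair B hB)
      have huB : u ∈ B := by rw [hBe]; simp
      have hwB : w ∈ B := by rw [hBe]; simp
      have hw : w = u + 1 := by
        by_contra hne
        have h1 : u + 1 < w := by omega
        have hu1 : u + 1 ∈ Finset.Icc 1 (2 * k) := by
          have h2 := Finset.mem_Icc.mp (hpart.2.1 B hB hwB)
          exact Finset.mem_Icc.mpr ⟨by omega, by omega⟩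
        obtain ⟨C, hC, hmC⟩ := hpart.2.2.2 _ hu1
        have hCneB : C ≠ B := by
          rintro rfl
          rw [hBe] at hmC
          simp only [Finset.mem_insert, Finset.mem_singleton] at hmC
          omega
        obtain ⟨c, d, hcd, hCe⟩ := pair_exists (hpair C hC)
        have hmin := hmax C hC
        rw [hCe, hBe, min_pair hcd, min_pair huw] at hmin
        have hcu : c ≤ u := WithTop.coe_le_coe.mp hmin
        have hd : d = u + 1 := by
          rw [hCe] at hmC
          simp only [Finset.mem_insert, Finset.mem_singleton] at hmC
          omega
        have hcu' : c < u := by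
          rcases lt_or_eq_of_le hcu with h | h
          · exact h
          · subst h
            exact absurd (block_eq_of_mem hpart hC hB (by rw [hCe]; simp) huB) hCneB
        exact crossFalse hNC hcu' (Nat.lt_succ_self u) h1 hC hB hCneB
          (by rw [hCe]; simp) (by rw [hCe, hd]; simp) huB hwB
      subst hw
      intro x y hxy hall hx1 hy1
      have hxB := hall x le_rfl hxy
      have hyB := hall y hxy le_rfl
      rw [hBe] at hxB hyB hx1 hy1
      simp only [Finset.mem_insert, Finset.mem_singleton] at hxB hyB hx1 hy1
      rw [Nat.even_iff]
      omega
    · -- parity condition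
      intro V hV W hW hVW u hu v hv huv _hgap
      obtain ⟨a, b, hab, hWe⟩ := pair_exists (hpair W hW)
      have haW : a ∈ W := by rw [hWe]; simp
      have hbW : b ∈ W := by rw [hWe]; simp
      have hEv : Even (b - a - 1) := ioo_even hpart hpair hNC hab (hWe ▸ hW)
      have hpar : b % 2 ≠ a % 2 := by
        rw [Nat.even_iff] at hEv
        omega
      have hnotV : ∀ x ∈ W, x ∉ V := by
        intro x hxW hxV
        exact hVW (block_eq_of_mem hpart hV hW hxV hxW)
      have hau : a ≠ u := fun h => hnotV a haW (h ▸ hu)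
      have hav : a ≠ v := fun h => hnotV a haW (h ▸ hv)
      have hbu : b ≠ u := fun h => hnotV b hbW (h ▸ hu)
      have hbv : b ≠ v := fun h => hnotV b hbW (h ▸ hv)
      have hVWne : V ≠ W := hVW
      by_cases hain : u < a ∧ a < v
      · have hbin : u < b ∧ b < v := by
          by_contra hcon
          rcases (by omega : b < u ∨ v < b) with h | h
          · exact crossFalse hNC h hain.1 hain.2 hW hV hVWne.symm hbW haW hu hv
          · exact crossFalse hNC hain.1 hain.2 h hV hW hVWne hu hv haW hbW
        rcases Nat.even_or_odd a with hap | hap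
        · have ha2 : a % 2 = 0 := Nat.even_iff.mp hap
          have e1 : W.filter (fun w => u < w ∧ w < v ∧ Odd w) = {b} := by
            ext x
            simp only [Finset.mem_filter, hWe, Finset.mem_insert, Finset.mem_singleton,
              Nat.odd_iff]
            omega
          have e2 : W.filter (fun w => u < w ∧ w < v ∧ Even w) = {a} := by
            ext x
            simp only [Finset.mem_filter, hWe, Finset.mem_insert, Finset.mem_singleton,
              Nat.even_iff]
            omega
          rw [e1, e2, Finset.card_singleton, Finset.card_singleton]
        · have ha2 : a % 2 = 1 := Nat.odd_iff.mp hap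
          have e1 : W.filter (fun w => u < w ∧ w < v ∧ Odd w) = {a} := by
            ext x
            simp only [Finset.mem_filter, hWe, Finset.mem_insert, Finset.mem_singleton,
              Nat.odd_iff]
            omega
          have e2 : W.filter (fun w => u < w ∧ w < v ∧ Even w) = {b} := by
            ext x
            simp only [Finset.mem_filter, hWe, Finset.mem_insert, Finset.mem_singleton,
              Nat.even_iff]
            omega
          rw [e1, e2, Finset.card_singleton, Finset.card_singleton]
      · have hbin : ¬(u < b ∧ b < v) := by
          intro hbin
          rcases (by omega : a < u ∨ v < a) with h | h
          · exact crossFalse hNC h hbin.1 hbin.2 hW hV hVWne.symm haW hbW hu hv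
          · exact crossFalse hNC hbin.1 hbin.2 h hV hW hVWne hu hv hbW haW
        have e1 : W.filter (fun w => u < w ∧ w < v ∧ Odd w) = ∅ := by
          ext x
          simp only [Finset.mem_filter, hWe, Finset.mem_insert, Finset.mem_singleton,
            Nat.odd_iff, Finset.notMem_empty, iff_false]
          omega
        have e2 : W.filter (fun w => u < w ∧ w < v ∧ Even w) = ∅ := by
          ext x
          simp only [Finset.mem_filter, hWe, Finset.mem_insert, Finset.mem_singleton,
            Nat.even_iff, Finset.notMem_empty, iff_false]
          omega
        rw [e1, e2]
end

section
/- For every k ≥ 1 and every 0 ≤ r ≤ k − 1, the number of non-crossing pair-partitions of {1,…,2k} having exactly r blocks whose smaller element is even equals (1/(r+1)) · C(k, r) · C(k−1, r), where C(·,·) denotes the binomial coefficient. -/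
open MeasureTheory ProbabilityTheory Filter Topology Matrix
open scoped ENNReal NNReal BigOperators Classical

namespace NCnar
open Finset


/-- prefix count -/
def cnt (Z : Finset ℕ) (m : ℕ) : ℕ := (Z.filter (fun x => x ≤ m)).card

lemma cnt_mono (Z : Finset ℕ) {m m' : ℕ} (h : m ≤ m') : cnt Z m ≤ cnt Z m' := by
  apply Finset.card_le_card
  intro x hx
  simp only [mem_filter] at hx ⊢
  exact ⟨hx.1, le_trans hx.2 h⟩

lemma cnt_succ (Z : Finset ℕ) (m : ℕ) :
    cnt Z (m + 1) = cnt Z m + (if m + 1 ∈ Z then 1 else 0) := by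
  unfold cnt
  by_cases h : m + 1 ∈ Z
  · simp only [h, if_true]
    have : Z.filter (fun x => x ≤ m + 1) = insert (m+1) (Z.filter (fun x => x ≤ m)) := by
      ext x; simp only [mem_filter, mem_insert]; constructor
      · rintro ⟨hx, hle⟩
        rcases Nat.lt_or_ge x (m+1) with h'|h'
        · exact Or.inr ⟨hx, by omega⟩
        · exact Or.inl (by omega)
      · rintro (rfl|⟨hx,hle⟩)
        · exact ⟨h, le_refl _⟩
        · exact ⟨hx, by omega⟩
    rw [this, card_insert_of_notMem (by simp)]
  · simp only [h, if_false, add_zero]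
    congr 1
    ext x; simp only [mem_filter]
    constructor
    · rintro ⟨hx, hle⟩
      refine ⟨hx, ?_⟩
      have : x ≠ m + 1 := by rintro rfl; exact h hx
      omega
    · rintro ⟨hx, hle⟩; exact ⟨hx, by omega⟩

lemma cnt_full {Z : Finset ℕ} {n m : ℕ} (hZ : Z ⊆ Icc 1 n) (h : n ≤ m) : cnt Z m = Z.card := by
  unfold cnt
  congr 1
  apply filter_true_of_mem
  intro x hx
  have := hZ hx
  simp only [mem_Icc] at this
  omega

lemma cnt_zero {Z : Finset ℕ} {n : ℕ} (hZ : Z ⊆ Icc 1 n) : cnt Z 0 = 0 := by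
  unfold cnt
  rw [card_eq_zero, filter_eq_empty_iff]
  intro x hx
  have := hZ hx
  simp only [mem_Icc] at this
  omega

/-- first violation -/
noncomputable def vio (X Y : Finset ℕ) : ℕ := sInf {m | cnt X m < cnt Y m}

noncomputable def spl (XY : Finset ℕ × Finset ℕ) : Finset ℕ × Finset ℕ :=
  (XY.1.filter (fun x => x ≤ vio XY.1 XY.2) ∪ XY.2.filter (fun x => ¬ x ≤ vio XY.1 XY.2),
   XY.2.filter (fun x => x ≤ vio XY.1 XY.2) ∪ XY.1.filter (fun x => ¬ x ≤ vio XY.1 XY.2))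

section core

variable {X Y : Finset ℕ} {n : ℕ}

lemma vio_mem (hne : {m | cnt X m < cnt Y m}.Nonempty) :
    cnt X (vio X Y) < cnt Y (vio X Y) := Nat.sInf_mem hne

lemma vio_min {j : ℕ} (hj : j < vio X Y) : cnt Y j ≤ cnt X j := by
  have : j ∉ {m | cnt X m < cnt Y m} := Nat.notMem_of_lt_sInf hj
  simpa [Set.mem_setOf_eq, not_lt] using this

lemma vio_pos (hY : Y ⊆ Icc 1 n) (hne : {m | cnt X m < cnt Y m}.Nonempty) : 1 ≤ vio X Y := by
  rcases Nat.eq_zero_or_pos (vio X Y) with h|h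
  · exfalso
    have h2 := vio_mem hne
    rw [h] at h2
    rw [cnt_zero hY] at h2
    omega
  · exact h

lemma vio_step (hY : Y ⊆ Icc 1 n) (hne : {m | cnt X m < cnt Y m}.Nonempty) :
    cnt Y (vio X Y) = cnt X (vio X Y) + 1 := by
  have h1 := vio_mem hne
  have hp : 1 ≤ vio X Y := vio_pos hY hne
  obtain ⟨m, hm⟩ : ∃ m, vio X Y = m + 1 := ⟨vio X Y - 1, by omega⟩
  have h2 : cnt Y m ≤ cnt X m := vio_min (by omega)
  have h3 := cnt_succ Y m
  have h4 := cnt_succ X m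
  rw [hm] at h1 ⊢
  by_cases hy : m + 1 ∈ Y <;> by_cases hx : m + 1 ∈ X <;> simp [hy, hx] at h3 h4 <;> omega

end core

section core2

variable {X Y : Finset ℕ} {n : ℕ}

lemma cnt_band (Z : Finset ℕ) {m j : ℕ} (h : m ≤ j) :
    cnt Z m + (Z.filter (fun x => m < x ∧ x ≤ j)).card = cnt Z j := by
  unfold cnt
  rw [← card_union_of_disjoint]
  · congr 1
    ext x
    simp only [mem_union, mem_filter]
    constructor
    · rintro (⟨hx, h1⟩|⟨hx, h1, h2⟩) <;> exact ⟨hx, by omega⟩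
    · rintro ⟨hx, h1⟩
      by_cases h2 : x ≤ m
      · exact Or.inl ⟨hx, h2⟩
      · exact Or.inr ⟨hx, by omega, h1⟩
  · rw [disjoint_left]
    intro x hx hx'
    simp only [mem_filter] at hx hx'
    omega

lemma spl1_filter_le {j : ℕ} (hj : j ≤ vio X Y) :
    (spl (X, Y)).1.filter (fun x => x ≤ j) = X.filter (fun x => x ≤ j) := by
  ext x
  simp only [spl, mem_filter, mem_union]
  constructor
  · rintro ⟨⟨hx, h1⟩|⟨hx, h1⟩, h2⟩
    · exact ⟨hx, h2⟩
    · omega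
  · rintro ⟨hx, h1⟩
    exact ⟨Or.inl ⟨hx, by omega⟩, h1⟩

lemma spl2_filter_le {j : ℕ} (hj : j ≤ vio X Y) :
    (spl (X, Y)).2.filter (fun x => x ≤ j) = Y.filter (fun x => x ≤ j) := by
  ext x
  simp only [spl, mem_filter, mem_union]
  constructor
  · rintro ⟨⟨hx, h1⟩|⟨hx, h1⟩, h2⟩
    · exact ⟨hx, h2⟩
    · omega
  · rintro ⟨hx, h1⟩
    exact ⟨Or.inl ⟨hx, by omega⟩, h1⟩

lemma spl1_filter_gt :
    (spl (X, Y)).1.filter (fun x => ¬ x ≤ vio X Y) = Y.filter (fun x => ¬ x ≤ vio X Y) := by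
  ext x
  simp only [spl, mem_filter, mem_union]
  constructor
  · rintro ⟨⟨hx, h1⟩|⟨hx, h1⟩, h2⟩
    · omega
    · exact ⟨hx, h2⟩
  · rintro ⟨hx, h1⟩
    exact ⟨Or.inr ⟨hx, h1⟩, h1⟩

lemma spl2_filter_gt :
    (spl (X, Y)).2.filter (fun x => ¬ x ≤ vio X Y) = X.filter (fun x => ¬ x ≤ vio X Y) := by
  ext x
  simp only [spl, mem_filter, mem_union]
  constructor
  · rintro ⟨⟨hx, h1⟩|⟨hx, h1⟩, h2⟩
    · omega
    · exact ⟨hx, h2⟩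
  · rintro ⟨hx, h1⟩
    exact ⟨Or.inr ⟨hx, h1⟩, h1⟩

lemma cnt_spl1_le {j : ℕ} (hj : j ≤ vio X Y) : cnt (spl (X, Y)).1 j = cnt X j := by
  unfold cnt; rw [spl1_filter_le hj]

lemma cnt_spl2_le {j : ℕ} (hj : j ≤ vio X Y) : cnt (spl (X, Y)).2 j = cnt Y j := by
  unfold cnt; rw [spl2_filter_le hj]

lemma cnt_spl1_ge {j : ℕ} (hj : vio X Y ≤ j) :
    cnt (spl (X, Y)).1 j + cnt Y (vio X Y) = cnt X (vio X Y) + cnt Y j := by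
  have e1 : (spl (X, Y)).1.filter (fun x => x ≤ j)
      = X.filter (fun x => x ≤ vio X Y) ∪ Y.filter (fun x => vio X Y < x ∧ x ≤ j) := by
    ext x
    simp only [spl, mem_filter, mem_union]
    constructor
    · rintro ⟨⟨hx, h1⟩|⟨hx, h1⟩, h2⟩
      · exact Or.inl ⟨hx, h1⟩
      · exact Or.inr ⟨hx, by omega, h2⟩
    · rintro (⟨hx, h1⟩|⟨hx, h1, h2⟩)
      · exact ⟨Or.inl ⟨hx, h1⟩, by omega⟩
      · exact ⟨Or.inr ⟨hx, by omega⟩, h2⟩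
  have hd : Disjoint (X.filter (fun x => x ≤ vio X Y)) (Y.filter (fun x => vio X Y < x ∧ x ≤ j)) := by
    rw [disjoint_left]
    intro x hx hx'
    simp only [mem_filter] at hx hx'
    omega
  have := cnt_band Y hj
  show (_root_.Finset.filter _ _).card + _ = _
  rw [e1, card_union_of_disjoint hd]
  unfold cnt at this ⊢
  omega

lemma cnt_spl2_ge {j : ℕ} (hj : vio X Y ≤ j) :
    cnt (spl (X, Y)).2 j + cnt X (vio X Y) = cnt Y (vio X Y) + cnt X j := by
  have e1 : (spl (X, Y)).2.filter (fun x => x ≤ j)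
      = Y.filter (fun x => x ≤ vio X Y) ∪ X.filter (fun x => vio X Y < x ∧ x ≤ j) := by
    ext x
    simp only [spl, mem_filter, mem_union]
    constructor
    · rintro ⟨⟨hx, h1⟩|⟨hx, h1⟩, h2⟩
      · exact Or.inl ⟨hx, h1⟩
      · exact Or.inr ⟨hx, by omega, h2⟩
    · rintro (⟨hx, h1⟩|⟨hx, h1, h2⟩)
      · exact ⟨Or.inl ⟨hx, h1⟩, by omega⟩
      · exact ⟨Or.inr ⟨hx, by omega⟩, h2⟩
  have hd : Disjoint (Y.filter (fun x => x ≤ vio X Y)) (X.filter (fun x => vio X Y < x ∧ x ≤ j)) := by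
    rw [disjoint_left]
    intro x hx hx'
    simp only [mem_filter] at hx hx'
    omega
  have := cnt_band X hj
  show (_root_.Finset.filter _ _).card + _ = _
  rw [e1, card_union_of_disjoint hd]
  unfold cnt at this ⊢
  omega

lemma spl_subset (hX : X ⊆ Icc 1 n) (hY : Y ⊆ Icc 1 n) :
    (spl (X, Y)).1 ⊆ Icc 1 n ∧ (spl (X, Y)).2 ⊆ Icc 1 n := by
  constructor <;>
  · intro x hx
    simp only [spl, mem_union, mem_filter] at hx
    rcases hx with ⟨hx,_⟩|⟨hx,_⟩
    · first | exact hX hx | exact hY hx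
    · first | exact hX hx | exact hY hx

lemma spl1_card (hX : X ⊆ Icc 1 n) (hY : Y ⊆ Icc 1 n)
    (hne : {m | cnt X m < cnt Y m}.Nonempty) :
    (spl (X, Y)).1.card + 1 = Y.card := by
  have hS : (spl (X, Y)).1 ⊆ Icc 1 n := (spl_subset hX hY).1
  have hj : vio X Y ≤ max n (vio X Y) := le_max_right _ _
  have h1 := cnt_spl1_ge (X := X) (Y := Y) hj
  rw [cnt_full hS (le_max_left _ _), cnt_full hY (le_max_left _ _)] at h1
  have h2 := vio_step hY hne
  omega

lemma spl2_card (hX : X ⊆ Icc 1 n) (hY : Y ⊆ Icc 1 n)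
    (hne : {m | cnt X m < cnt Y m}.Nonempty) :
    (spl (X, Y)).2.card = X.card + 1 := by
  have hS : (spl (X, Y)).2 ⊆ Icc 1 n := (spl_subset hX hY).2
  have hj : vio X Y ≤ max n (vio X Y) := le_max_right _ _
  have h1 := cnt_spl2_ge (X := X) (Y := Y) hj
  rw [cnt_full hS (le_max_left _ _), cnt_full hX (le_max_left _ _)] at h1
  have h2 := vio_step hY hne
  omega

lemma vio_spl (hY : Y ⊆ Icc 1 n) (hne : {m | cnt X m < cnt Y m}.Nonempty) :
    vio (spl (X, Y)).1 (spl (X, Y)).2 = vio X Y := by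
  have hmem : vio X Y ∈ {m | cnt (spl (X, Y)).1 m < cnt (spl (X, Y)).2 m} := by
    simp only [Set.mem_setOf_eq]
    rw [cnt_spl1_le (le_refl _), cnt_spl2_le (le_refl _)]
    exact vio_mem hne
  apply le_antisymm
  · exact Nat.sInf_le hmem
  · by_contra h
    push_neg at h
    have h2 : vio (spl (X, Y)).1 (spl (X, Y)).2 ∈ {m | cnt (spl (X, Y)).1 m < cnt (spl (X, Y)).2 m} :=
      Nat.sInf_mem ⟨_, hmem⟩
    simp only [Set.mem_setOf_eq] at h2
    rw [cnt_spl1_le (le_of_lt h), cnt_spl2_le (le_of_lt h)] at h2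
    exact absurd h2 (not_lt.mpr (vio_min h))

lemma spl_spl (hY : Y ⊆ Icc 1 n) (hne : {m | cnt X m < cnt Y m}.Nonempty) :
    spl (spl (X, Y)) = (X, Y) := by
  have hv : vio (spl (X, Y)).1 (spl (X, Y)).2 = vio X Y := vio_spl hY hne
  have e1 := spl1_filter_le (X := X) (Y := Y) (le_refl (vio X Y))
  have e2 := spl2_filter_le (X := X) (Y := Y) (le_refl (vio X Y))
  have e3 := spl1_filter_gt (X := X) (Y := Y)
  have e4 := spl2_filter_gt (X := X) (Y := Y)
  have c1 : (spl (spl (X, Y))).1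
      = (spl (X, Y)).1.filter (fun x => x ≤ vio (spl (X, Y)).1 (spl (X, Y)).2)
        ∪ (spl (X, Y)).2.filter (fun x => ¬ x ≤ vio (spl (X, Y)).1 (spl (X, Y)).2) := rfl
  have c2 : (spl (spl (X, Y))).2
      = (spl (X, Y)).2.filter (fun x => x ≤ vio (spl (X, Y)).1 (spl (X, Y)).2)
        ∪ (spl (X, Y)).1.filter (fun x => ¬ x ≤ vio (spl (X, Y)).1 (spl (X, Y)).2) := rfl
  rw [hv] at c1 c2
  rw [e1, e4] at c1
  rw [e2, e3] at c2
  apply Prod.ext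
  · rw [c1, filter_union_filter_not_eq]
  · rw [c2, filter_union_filter_not_eq]

end core2

theorem card_bad (n r : ℕ) (hr : 1 ≤ r) :
    ((((Icc 1 n).powersetCard r) ×ˢ ((Icc 1 n).powersetCard r)).filter
      (fun XY => ¬ ∀ m, cnt XY.2 m ≤ cnt XY.1 m)).card
    = n.choose (r-1) * n.choose (r+1) := by
  have key : ((((Icc 1 n).powersetCard r) ×ˢ ((Icc 1 n).powersetCard r)).filter
      (fun XY => ¬ ∀ m, cnt XY.2 m ≤ cnt XY.1 m)).card
      = (((Icc 1 n).powersetCard (r-1)) ×ˢ ((Icc 1 n).powersetCard (r+1))).card := by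
    apply Finset.card_bij' (fun XY _ => spl XY) (fun ST _ => spl ST)
    · rintro ⟨X, Y⟩ ha
      simp only [mem_filter, mem_product, mem_powersetCard] at ha
      obtain ⟨⟨⟨hX, hXc⟩, ⟨hY, hYc⟩⟩, hnd⟩ := ha
      push_neg at hnd
      obtain ⟨m, hm⟩ := hnd
      have hne : {m | cnt X m < cnt Y m}.Nonempty := ⟨m, hm⟩
      simp only [mem_product, mem_powersetCard]
      refine ⟨⟨(spl_subset hX hY).1, ?_⟩, ⟨(spl_subset hX hY).2, ?_⟩⟩
      · have := spl1_card hX hY hne; omega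
      · have := spl2_card hX hY hne; omega
    · rintro ⟨S, T⟩ ha
      simp only [mem_product, mem_powersetCard] at ha
      obtain ⟨⟨hS, hSc⟩, ⟨hT, hTc⟩⟩ := ha
      have hne : {m | cnt S m < cnt T m}.Nonempty := by
        refine ⟨n, ?_⟩
        simp only [Set.mem_setOf_eq]
        rw [cnt_full hS (le_refl n), cnt_full hT (le_refl n), hSc, hTc]
        omega
      simp only [mem_filter, mem_product, mem_powersetCard]
      refine ⟨⟨⟨(spl_subset hS hT).1, ?_⟩, ⟨(spl_subset hS hT).2, ?_⟩⟩, ?_⟩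
      · have := spl1_card hS hT hne; omega
      · have := spl2_card hS hT hne; omega
      · push_neg
        refine ⟨vio S T, ?_⟩
        rw [cnt_spl1_le (le_refl _), cnt_spl2_le (le_refl _)]
        exact vio_mem hne
    · rintro ⟨X, Y⟩ ha
      simp only [mem_filter, mem_product, mem_powersetCard] at ha
      obtain ⟨⟨⟨hX, hXc⟩, ⟨hY, hYc⟩⟩, hnd⟩ := ha
      push_neg at hnd
      obtain ⟨m, hm⟩ := hnd
      exact spl_spl hY ⟨m, hm⟩
    · rintro ⟨S, T⟩ ha
      simp only [mem_product, mem_powersetCard] at ha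
      obtain ⟨⟨hS, hSc⟩, ⟨hT, hTc⟩⟩ := ha
      apply spl_spl hT
      refine ⟨n, ?_⟩
      simp only [Set.mem_setOf_eq]
      rw [cnt_full hS (le_refl n), cnt_full hT (le_refl n), hSc, hTc]
      omega
  rw [key, card_product, card_powersetCard, card_powersetCard, Nat.card_Icc]
  norm_num

theorem good_count (n r : ℕ) (hr : 1 ≤ r) :
    ((((Icc 1 n).powersetCard r) ×ˢ ((Icc 1 n).powersetCard r)).filter
      (fun XY => ∀ m, cnt XY.2 m ≤ cnt XY.1 m)).card + n.choose (r-1) * n.choose (r+1)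
    = n.choose r * n.choose r := by
  rw [← card_bad n r hr, card_filter_add_card_filter_not, card_product]
  simp [card_powersetCard, Nat.card_Icc]

theorem good_count_zero (n : ℕ) :
    ((((Icc 1 n).powersetCard 0) ×ˢ ((Icc 1 n).powersetCard 0)).filter
      (fun XY => ∀ m, cnt XY.2 m ≤ cnt XY.1 m)).card = 1 := by
  rw [powersetCard_zero]
  rw [filter_true_of_mem]
  · simp
  · rintro ⟨X, Y⟩ ha
    simp only [mem_product, mem_singleton] at ha
    rw [ha.1, ha.2]
    intro m
    exact le_refl _

def phi1 (k : ℕ) (O : Finset ℕ) : Finset ℕ := (Icc 1 k).filter (fun x => 2*x ∈ O)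
def phi2 (k : ℕ) (O : Finset ℕ) : Finset ℕ := (Icc 1 (k-1)).filter (fun m => ¬ (2*m+1 ∈ O))
def psi (k : ℕ) (XY : Finset ℕ × Finset ℕ) : Finset ℕ :=
  XY.1.image (fun x => 2*x) ∪ ((Icc 1 k).filter (fun m => ¬ (m-1 ∈ XY.2))).image (fun m => 2*m-1)

lemma master {k : ℕ} {O : Finset ℕ} (hO : O ⊆ Icc 1 (2*k)) (h1 : 1 ∈ O) :
    ∀ m, m ≤ k - 1 → cnt O (2*m+1) + cnt (phi2 k O) m = cnt (phi1 k O) m + m + 1 := by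
  intro m
  induction m with
  | zero =>
    intro _
    have e1 : cnt O 1 = 1 := by
      have : O.filter (fun x => x ≤ 1) = {1} := by
        ext x
        simp only [mem_filter, mem_singleton]
        constructor
        · rintro ⟨hx, hle⟩
          have := hO hx
          simp only [mem_Icc] at this
          omega
        · rintro rfl
          exact ⟨h1, le_refl _⟩
      unfold cnt
      rw [this, card_singleton]
    have e2 : cnt (phi2 k O) 0 = 0 := cnt_zero (filter_subset _ _)
    have e3 : cnt (phi1 k O) 0 = 0 := cnt_zero (filter_subset _ _)
    simpa [e1, e2, e3] using rfl
  | succ m ih =>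
    intro hm
    have ihm := ih (by omega)
    have a1 : cnt O (2*m+2) = cnt O (2*m+1) + (if 2*m+2 ∈ O then 1 else 0) := by
      rw [show 2*m+2 = (2*m+1)+1 by ring]
      exact cnt_succ O (2*m+1)
    have a2 : cnt O (2*m+3) = cnt O (2*m+2) + (if 2*m+3 ∈ O then 1 else 0) := by
      rw [show 2*m+3 = (2*m+2)+1 by ring]
      exact cnt_succ O (2*m+2)
    have hg : 2*(m+1)+1 = 2*m+3 := by ring
    have hX : cnt (phi1 k O) (m+1) = cnt (phi1 k O) m + (if 2*m+2 ∈ O then 1 else 0) := by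
      rw [cnt_succ (phi1 k O) m]
      congr 1
      have : m + 1 ∈ phi1 k O ↔ 2*m+2 ∈ O := by
        unfold phi1
        simp only [mem_filter, mem_Icc]
        constructor
        · rintro ⟨_, h⟩
          have : 2*(m+1) = 2*m+2 := by ring
          rwa [this] at h
        · intro h
          refine ⟨⟨by omega, by omega⟩, by rw [show 2*(m+1) = 2*m+2 by ring]; exact h⟩
      by_cases h : 2*m+2 ∈ O
      · rw [if_pos (this.mpr h), if_pos h]
      · rw [if_neg (fun hh => h (this.mp hh)), if_neg h]
    have hY : cnt (phi2 k O) (m+1) = cnt (phi2 k O) m + (1 - (if 2*m+3 ∈ O then 1 else 0)) := by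
      rw [cnt_succ (phi2 k O) m]
      congr 1
      have : m + 1 ∈ phi2 k O ↔ ¬ (2*m+3 ∈ O) := by
        unfold phi2
        simp only [mem_filter, mem_Icc]
        constructor
        · rintro ⟨_, h⟩
          rwa [show 2*(m+1)+1 = 2*m+3 by ring] at h
        · intro h
          exact ⟨⟨by omega, by omega⟩, by rw [show 2*(m+1)+1 = 2*m+3 by ring]; exact h⟩
      by_cases h : 2*m+3 ∈ O
      · rw [if_neg (fun hh => (this.mp hh) h), if_pos h]
      · rw [if_pos (this.mpr h), if_neg h]
    rw [hg]
    by_cases h2 : 2*m+2 ∈ O <;> by_cases h3 : 2*m+3 ∈ O <;>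
      simp only [h2, h3, if_true, if_false] at a1 a2 hX hY <;> omega


section facts
variable {k : ℕ} {O : Finset ℕ}

lemma ballot_one (hO : O ⊆ Icc 1 (2*k)) (hb : ∀ j, j ≤ 2*k → j ≤ 2 * cnt O j) (hk : 1 ≤ k) :
    1 ∈ O := by
  have h := hb 1 (by omega)
  have hpos : 0 < cnt O 1 := by omega
  rw [cnt, card_pos] at hpos
  obtain ⟨x, hx⟩ := hpos
  simp only [mem_filter] at hx
  have := hO hx.1
  simp only [mem_Icc] at this
  have hx1 : x = 1 := by omega
  have := hx.1
  rwa [hx1] at this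

lemma ballot_top (hO : O ⊆ Icc 1 (2*k)) (hcard : O.card = k)
    (hb : ∀ j, j ≤ 2*k → j ≤ 2 * cnt O j) (hk : 1 ≤ k) : 2*k ∉ O := by
  have h := hb (2*k-1) (by omega)
  have hsub : O.filter (fun x => x ≤ 2*k-1) ⊆ O := filter_subset _ _
  have hge : O.card ≤ (O.filter (fun x => x ≤ 2*k-1)).card := by
    have : cnt O (2*k-1) ≥ k := by omega
    rw [cnt] at this
    omega
  have heq : O.filter (fun x => x ≤ 2*k-1) = O := Finset.eq_of_subset_of_card_le hsub hge
  intro hmem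
  have : 2*k ∈ O.filter (fun x => x ≤ 2*k-1) := heq.symm ▸ hmem
  simp only [mem_filter] at this
  omega

lemma Oset_sub (hO : O ⊆ Icc 1 (2*k)) (h2k : 2*k ∉ O) : O ⊆ Icc 1 (2*k-1) := by
  intro x hx
  have := hO hx
  simp only [mem_Icc] at this ⊢
  have : x ≠ 2*k := fun h => h2k (h ▸ hx)
  omega

lemma phi1_subset (h2k : 2*k ∉ O) : phi1 k O ⊆ Icc 1 (k-1) := by
  intro x hx
  simp only [phi1, mem_filter, mem_Icc] at hx ⊢
  have : x ≠ k := by rintro rfl; exact h2k hx.2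
  omega

lemma phi2_subset : phi2 k O ⊆ Icc 1 (k-1) := filter_subset _ _

lemma phi1_card (hO : O ⊆ Icc 1 (2*k)) :
    (phi1 k O).card = (O.filter (fun j => Even j)).card := by
  apply Finset.card_bij (fun x _ => 2*x)
  · intro x hx
    simp only [phi1, mem_filter, mem_Icc] at hx
    simp only [mem_filter]
    exact ⟨hx.2, even_two_mul x⟩
  · intro x hx y hy hxy
    omega
  · intro j hj
    simp only [mem_filter] at hj
    obtain ⟨hjO, hje⟩ := hj
    have hj2 := hO hjO
    simp only [mem_Icc] at hj2
    rw [Nat.even_iff] at hje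
    refine ⟨j / 2, ?_, by omega⟩
    simp only [phi1, mem_filter, mem_Icc]
    refine ⟨⟨by omega, by omega⟩, ?_⟩
    have : 2 * (j / 2) = j := by omega
    rwa [this]

lemma card_master (hO : O ⊆ Icc 1 (2*k)) (h1 : 1 ∈ O) (h2k : 2*k ∉ O) (hk : 1 ≤ k) :
    O.card + (phi2 k O).card = (phi1 k O).card + k := by
  have hm := master hO h1 (k-1) (le_refl _)
  rw [show 2*(k-1)+1 = 2*k-1 by omega] at hm
  rw [cnt_full (Oset_sub hO h2k) (le_refl _)] at hm
  rw [cnt_full (phi2_subset (O := O) (k := k)) (le_refl _)] at hm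
  rw [cnt_full (phi1_subset h2k) (le_refl _)] at hm
  omega

end facts

section psifacts

lemma mem_psi {k : ℕ} {X Y : Finset ℕ} {j : ℕ} : j ∈ psi k (X, Y) ↔
    (∃ x ∈ X, j = 2*x) ∨ (∃ m, (1 ≤ m ∧ m ≤ k) ∧ ¬ (m-1 ∈ Y) ∧ j = 2*m-1) := by
  simp only [psi, mem_union, mem_image, mem_filter, mem_Icc]
  constructor
  · rintro (⟨x, hx, rfl⟩|⟨m, ⟨⟨hm1, hm2⟩, hmY⟩, rfl⟩)
    · exact Or.inl ⟨x, hx, rfl⟩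
    · exact Or.inr ⟨m, ⟨⟨hm1, hm2⟩, hmY, rfl⟩⟩
  · rintro (⟨x, hx, rfl⟩|⟨m, ⟨⟨hm1, hm2⟩, hmY, rfl⟩⟩)
    · exact Or.inl ⟨x, hx, rfl⟩
    · exact Or.inr ⟨m, ⟨⟨hm1, hm2⟩, hmY⟩, rfl⟩

lemma psi_subset {k : ℕ} {X Y : Finset ℕ} (hX : X ⊆ Icc 1 (k-1)) (hk : 1 ≤ k) :
    psi k (X, Y) ⊆ Icc 1 (2*k) := by
  intro j hj
  rw [mem_psi] at hj
  simp only [mem_Icc]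
  rcases hj with ⟨x, hx, rfl⟩|⟨m, ⟨⟨hm1, hm2⟩, _, rfl⟩⟩
  · have := hX hx
    simp only [mem_Icc] at this
    omega
  · omega

lemma psi_one {k : ℕ} {X Y : Finset ℕ} (hY : Y ⊆ Icc 1 (k-1)) (hk : 1 ≤ k) :
    1 ∈ psi k (X, Y) := by
  rw [mem_psi]
  refine Or.inr ⟨1, ⟨⟨le_refl _, hk⟩, ?_, by omega⟩⟩
  intro h0
  have := hY h0
  simp only [mem_Icc] at this
  omega

lemma psi_top {k : ℕ} {X Y : Finset ℕ} (hX : X ⊆ Icc 1 (k-1)) (hk : 1 ≤ k) :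
    2*k ∉ psi k (X, Y) := by
  intro hmem
  rw [mem_psi] at hmem
  rcases hmem with ⟨x, hx, he⟩|⟨m, ⟨⟨hm1, hm2⟩, _, he⟩⟩
  · have := hX hx
    simp only [mem_Icc] at this
    omega
  · omega


lemma phi_psi1 {k : ℕ} {X Y : Finset ℕ} (hX : X ⊆ Icc 1 (k-1)) (hk : 1 ≤ k) :
    phi1 k (psi k (X, Y)) = X := by
  ext x
  simp only [phi1, mem_filter, mem_Icc]
  constructor
  · rintro ⟨⟨hx1, hx2⟩, hmem⟩
    rw [mem_psi] at hmem
    rcases hmem with ⟨x', hx', he⟩|⟨m, ⟨⟨hm1, hm2⟩, _, he⟩⟩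
    · have : x = x' := by omega
      rwa [this]
    · omega
  · intro hx
    have hb := hX hx
    simp only [mem_Icc] at hb
    refine ⟨⟨by omega, by omega⟩, ?_⟩
    rw [mem_psi]
    exact Or.inl ⟨x, hx, rfl⟩

lemma phi_psi2 {k : ℕ} {X Y : Finset ℕ} (hY : Y ⊆ Icc 1 (k-1)) (hk : 1 ≤ k) :
    phi2 k (psi k (X, Y)) = Y := by
  ext m
  simp only [phi2, mem_filter, mem_Icc]
  constructor
  · rintro ⟨⟨hm1, hm2⟩, hmem⟩
    by_contra hmY
    apply hmem
    rw [mem_psi]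
    refine Or.inr ⟨m+1, ⟨⟨by omega, by omega⟩, ?_, by omega⟩⟩
    simpa using hmY
  · intro hm
    have hb := hY hm
    simp only [mem_Icc] at hb
    refine ⟨⟨by omega, by omega⟩, ?_⟩
    intro hmem
    rw [mem_psi] at hmem
    rcases hmem with ⟨x', hx', he⟩|⟨m', ⟨⟨hm1, hm2⟩, hm'Y, he⟩⟩
    · omega
    · have : m' = m + 1 := by omega
      rw [this] at hm'Y
      simp only [Nat.add_sub_cancel] at hm'Y
      exact hm'Y hm

lemma psi_phi {k : ℕ} {O : Finset ℕ} (hO : O ⊆ Icc 1 (2*k)) (h1 : 1 ∈ O) (h2k : 2*k ∉ O)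
    (hk : 1 ≤ k) : psi k (phi1 k O, phi2 k O) = O := by
  ext j
  rw [mem_psi]
  constructor
  · rintro (⟨x, hx, rfl⟩|⟨m, ⟨⟨hm1, hm2⟩, hmY, rfl⟩⟩)
    · simp only [phi1, mem_filter] at hx
      exact hx.2
    · simp only [phi2, mem_filter, mem_Icc] at hmY
      push_neg at hmY
      by_cases hm : m = 1
    
      · rw [hm]; simpa using h1
      · have h2 : 2*(m-1)+1 ∈ O := hmY ⟨by omega, by omega⟩
        rwa [show 2*(m-1)+1 = 2*m-1 by omega] at h2
  · intro hj
    have hb := hO hj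
    simp only [mem_Icc] at hb
    rcases Nat.even_or_odd j with he|ho
    · rw [Nat.even_iff] at he
      refine Or.inl ⟨j/2, ?_, by omega⟩
      simp only [phi1, mem_filter, mem_Icc]
      refine ⟨⟨by omega, by omega⟩, ?_⟩
      rw [show 2*(j/2) = j by omega]
      exact hj
    · rw [Nat.odd_iff] at ho
      refine Or.inr ⟨(j+1)/2, ⟨⟨by omega, ?_⟩, ?_, by omega⟩⟩
      · have : j ≠ 2*k := by rintro rfl; exact h2k hj
        omega
      · simp only [phi2, mem_filter, mem_Icc]
        push_neg
        intro _
        rwa [show 2*((j+1)/2-1)+1 = j by omega]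

lemma psi_card {k : ℕ} {X Y : Finset ℕ} (hX : X ⊆ Icc 1 (k-1)) (hY : Y ⊆ Icc 1 (k-1))
    (hk : 1 ≤ k) : (psi k (X, Y)).card + Y.card = X.card + k := by
  unfold psi
  dsimp only
  rw [card_union_of_disjoint]
  · have c1 : (X.image (fun x => 2*x)).card = X.card := by
      apply card_image_of_injOn
      intro a _ b _ h
      have h' : 2*a = 2*b := h
      omega
    have c2 : (((Icc 1 k).filter (fun m => ¬ (m-1 ∈ Y))).image (fun m => 2*m-1)).card
        = ((Icc 1 k).filter (fun m => ¬ (m-1 ∈ Y))).card := by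
      apply card_image_of_injOn
      intro a ha b hb h
      simp only [coe_filter, Set.mem_setOf_eq, mem_Icc] at ha hb
      have h' : 2*a-1 = 2*b-1 := h
      omega
    have c3 : ((Icc 1 k).filter (fun m => (m-1 ∈ Y))).card = Y.card := by
      apply Finset.card_bij (fun m _ => m - 1)
      · intro m hm
        simp only [mem_filter] at hm
        exact hm.2
      · intro a ha b hb h
        simp only [mem_filter, mem_Icc] at ha hb
        omega
      · intro y hy
        have hb := hY hy
        simp only [mem_Icc] at hb
        refine ⟨y+1, ?_, by omega⟩
        simp only [mem_filter, mem_Icc]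
        exact ⟨⟨by omega, by omega⟩, by simpa using hy⟩
    have c4 : ((Icc 1 k).filter (fun m => ¬ (m-1 ∈ Y))).card
        + ((Icc 1 k).filter (fun m => (m-1 ∈ Y))).card = k := by
      rw [add_comm, card_filter_add_card_filter_not, Nat.card_Icc]
      omega
    omega
  · rw [disjoint_left]
    intro a ha hb
    simp only [mem_image, mem_filter, mem_Icc] at ha hb
    obtain ⟨x, _, rfl⟩ := ha
    obtain ⟨m, ⟨⟨hm1, _⟩, _⟩, he⟩ := hb
    omega

lemma psi_evens {k : ℕ} {X Y : Finset ℕ} :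
    ((psi k (X, Y)).filter (fun j => Even j)).card = X.card := by
  have : (psi k (X, Y)).filter (fun j => Even j) = X.image (fun x => 2*x) := by
    ext j
    simp only [mem_filter, mem_image]
    constructor
    · rintro ⟨hj, hje⟩
      rw [mem_psi] at hj
      rcases hj with ⟨x, hx, rfl⟩|⟨m, ⟨⟨hm1, _⟩, _, rfl⟩⟩
      · exact ⟨x, hx, rfl⟩
      · rw [Nat.even_iff] at hje
        omega
    · rintro ⟨x, hx, rfl⟩
      refine ⟨?_, even_two_mul x⟩
      rw [mem_psi]
      exact Or.inl ⟨x, hx, rfl⟩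
  rw [this]
  apply card_image_of_injOn
  intro a _ b _ h
  have h' : 2*a = 2*b := h
  omega

end psifacts

noncomputable def goodF (n r : ℕ) : Finset (Finset ℕ × Finset ℕ) :=
  (((Icc 1 n).powersetCard r) ×ˢ ((Icc 1 n).powersetCard r)).filter
    (fun XY => ∀ m, cnt XY.2 m ≤ cnt XY.1 m)

noncomputable def ballotF' (k r : ℕ) : Finset (Finset ℕ) :=
  ((Icc 1 (2*k)).powerset).filter
    (fun O => O.card = k ∧ (∀ j, j ≤ 2*k → j ≤ 2 * cnt O j)
      ∧ (O.filter (fun j => Even j)).card = r)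

theorem ballot_eq_good (k r : ℕ) (hk : 1 ≤ k) :
    (ballotF' k r).card = (goodF (k-1) r).card := by
  apply Finset.card_bij' (fun O _ => (phi1 k O, phi2 k O)) (fun XY _ => psi k XY)
  · intro O hO'
    simp only [ballotF', mem_filter, mem_powerset] at hO'
    obtain ⟨hO, hcard, hb, hst⟩ := hO'
    have h1 : 1 ∈ O := ballot_one hO hb hk
    have h2k : 2*k ∉ O := ballot_top hO hcard hb hk
    have hx1 : (phi1 k O).card = r := by rw [phi1_card hO]; exact hst
    have hy1 : (phi2 k O).card = r := by
      have := card_master hO h1 h2k hk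
      omega
    simp only [goodF, mem_filter, mem_product, mem_powersetCard]
    refine ⟨⟨⟨phi1_subset h2k, hx1⟩, ⟨phi2_subset, hy1⟩⟩, ?_⟩
    intro m
    by_cases hm : m ≤ k - 1
    · have hmas := master hO h1 m hm
      have hbj := hb (2*m+1) (by omega)
      omega
    · push_neg at hm
      rw [cnt_full (phi1_subset h2k) (by omega), cnt_full phi2_subset (by omega)]
      omega
  · rintro ⟨X, Y⟩ hXY
    simp only [goodF, mem_filter, mem_product, mem_powersetCard] at hXY
    obtain ⟨⟨⟨hX, hXc⟩, ⟨hY, hYc⟩⟩, hdom⟩ := hXY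
    have hp1 := phi_psi1 (Y := Y) hX hk
    have hp2 := phi_psi2 (X := X) hY hk
    have hOsub : psi k (X, Y) ⊆ Icc 1 (2*k) := psi_subset hX hk
    have h1 : 1 ∈ psi k (X, Y) := psi_one hY hk
    have hmas := master hOsub h1
    rw [hp1, hp2] at hmas
    simp only [ballotF', mem_filter, mem_powerset]
    refine ⟨hOsub, ?_, ?_, ?_⟩
    · have := psi_card hX hY hk
      omega
    · intro j hj
      rcases Nat.even_or_odd j with he|ho
      · rw [Nat.even_iff] at he
        rcases Nat.eq_zero_or_pos j with rfl|hjpos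
        · omega
        · obtain ⟨m, rfl⟩ : ∃ m, j = 2*m := ⟨j/2, by omega⟩
          have hmono : cnt (psi k (X, Y)) (2*(m-1)+1) ≤ cnt (psi k (X, Y)) (2*m) :=
            cnt_mono _ (by omega)
          have := hmas (m-1) (by omega)
          have := hdom (m-1)
          omega
      · rw [Nat.odd_iff] at ho
        obtain ⟨m, rfl⟩ : ∃ m, j = 2*m+1 := ⟨j/2, by omega⟩
        have hj2 : 2*m+1 ≠ 2*k := by omega
        have := hmas m (by omega)
        have := hdom m
        omega
    · exact psi_evens.trans hXc
  · intro O hO'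
    simp only [ballotF', mem_filter, mem_powerset] at hO'
    obtain ⟨hO, hcard, hb, hst⟩ := hO'
    exact psi_phi hO (ballot_one hO hb hk) (ballot_top hO hcard hb hk) hk
  · rintro ⟨X, Y⟩ hXY
    simp only [goodF, mem_filter, mem_product, mem_powersetCard] at hXY
    obtain ⟨⟨⟨hX, _⟩, ⟨hY, _⟩⟩, _⟩ := hXY
    exact Prod.ext (phi_psi1 hX hk) (phi_psi2 hY hk)


def IsNCP (k : ℕ) (P : Finset (Finset ℕ)) : Prop :=
  IsPart (2*k) P ∧ (∀ B ∈ P, B.card = 2) ∧ NonCrossing P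

lemma minOf_mem {B : Finset ℕ} (h : B.Nonempty) : minOf B ∈ B := by
  have : minOf B = B.min' h := by
    rw [minOf, ← Finset.coe_min' h, WithTop.untopD_coe]
  rw [this]
  exact B.min'_mem h

lemma minOf_le {B : Finset ℕ} {x : ℕ} (hx : x ∈ B) : minOf B ≤ x := by
  have h : B.Nonempty := ⟨x, hx⟩
  have : minOf B = B.min' h := by
    rw [minOf, ← Finset.coe_min' h, WithTop.untopD_coe]
  rw [this]
  exact B.min'_le x hx

lemma minOf_eq_of {B : Finset ℕ} {u : ℕ} (hu : u ∈ B) (hle : ∀ x ∈ B, u ≤ x) :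
    minOf B = u :=
  le_antisymm (minOf_le hu) (hle _ (minOf_mem ⟨u, hu⟩))

lemma pair_struct {B : Finset ℕ} (h2 : B.card = 2) :
    ∃ u v, u < v ∧ B = {u, v} ∧ minOf B = u := by
  obtain ⟨a, b, hab, rfl⟩ := Finset.card_eq_two.mp h2
  rcases Nat.lt_or_ge a b with h|h
  · refine ⟨a, b, h, rfl, minOf_eq_of (by simp) ?_⟩
    intro x hx
    simp only [mem_insert, mem_singleton] at hx
    rcases hx with rfl|rfl <;> omega
  · have hba : b < a := by omega
    refine ⟨b, a, hba, by rw [Finset.pair_comm], minOf_eq_of (by simp) ?_⟩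
    intro x hx
    simp only [mem_insert, mem_singleton] at hx
    rcases hx with rfl|rfl <;> omega

section basic
variable {k : ℕ} {P : Finset (Finset ℕ)} (hP : IsNCP k P)

include hP in
lemma minOf_injOn {B C : Finset ℕ} (hB : B ∈ P) (hC : C ∈ P) (h : minOf B = minOf C) :
    B = C := by
  by_contra hne
  have hd := hP.1.2.2.1 B hB C hC hne
  have h1 : minOf B ∈ B := minOf_mem (hP.1.1 B hB)
  have h2 : minOf C ∈ C := minOf_mem (hP.1.1 C hC)
  rw [h] at h1
  exact Finset.disjoint_left.mp hd h1 h2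

include hP in
lemma biUnion_eq : P.biUnion id = Icc 1 (2*k) := by
  ext x
  simp only [mem_biUnion, id]
  constructor
  · rintro ⟨B, hB, hx⟩
    exact hP.1.2.1 B hB hx
  · intro hx
    exact hP.1.2.2.2 x hx

include hP in
lemma card_P : P.card = k := by
  have h1 : (P.biUnion id).card = 2*k := by rw [biUnion_eq hP, Nat.card_Icc]; omega
  have h2 : (P.biUnion id).card = ∑ B ∈ P, (id B).card :=
    Finset.card_biUnion (fun B hB C hC hne => hP.1.2.2.1 B hB C hC hne)
  simp only [id] at h2
  have h3 : ∑ B ∈ P, B.card = 2 * P.card := by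
    rw [Finset.sum_congr rfl (fun B hB => hP.2.1 B hB), Finset.sum_const, smul_eq_mul]
    ring
  omega

include hP in
lemma O_sub : P.image minOf ⊆ Icc 1 (2*k) := by
  intro y hy
  simp only [mem_image] at hy
  obtain ⟨B, hB, rfl⟩ := hy
  exact hP.1.2.1 B hB (minOf_mem (hP.1.1 B hB))

include hP in
lemma O_card : (P.image minOf).card = k := by
  rw [Finset.card_image_of_injOn, card_P hP]
  intro B hB C hC h
  exact minOf_injOn hP hB hC h

omit hP in
lemma O_filter_eq (p : ℕ → Prop) [DecidablePred p] :
    (P.image minOf).filter (fun y => p y) = (P.filter (fun B => p (minOf B))).image minOf := by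
  ext y
  simp only [mem_filter, mem_image]
  constructor
  · rintro ⟨⟨B, hB, rfl⟩, hp⟩
    exact ⟨B, ⟨hB, hp⟩, rfl⟩
  · rintro ⟨B, ⟨hB, hp⟩, rfl⟩
    exact ⟨⟨B, hB, rfl⟩, hp⟩

include hP in
lemma O_evens : ((P.image minOf).filter (fun j => Even j)).card
    = (P.filter (fun B => Even (minOf B))).card := by
  rw [O_filter_eq]
  apply Finset.card_image_of_injOn
  intro B hB C hC h
  exact minOf_injOn hP (mem_of_mem_filter B hB) (mem_of_mem_filter C hC) h

include hP in
lemma O_ballot : ∀ j, j ≤ 2*k → j ≤ 2 * cnt (P.image minOf) j := by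
  intro j hj
  have hflt : (P.image minOf).filter (fun x => x ≤ j)
      = (P.filter (fun B => minOf B ≤ j)).image minOf := O_filter_eq _
  have hcard : cnt (P.image minOf) j = (P.filter (fun B => minOf B ≤ j)).card := by
    rw [cnt, hflt]
    apply Finset.card_image_of_injOn
    intro B hB C hC h
    exact minOf_injOn hP (mem_of_mem_filter B hB) (mem_of_mem_filter C hC) h
  have hsub : Icc 1 j ⊆ (P.filter (fun B => minOf B ≤ j)).biUnion id := by
    intro x hx
    simp only [mem_Icc] at hx
    obtain ⟨B, hB, hxB⟩ := hP.1.2.2.2 x (by simp only [mem_Icc]; omega)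
    simp only [mem_biUnion, id]
    exact ⟨B, mem_filter.mpr ⟨hB, le_trans (minOf_le hxB) hx.2⟩, hxB⟩
  have h1 : j ≤ ((P.filter (fun B => minOf B ≤ j)).biUnion id).card := by
    have := Finset.card_le_card hsub
    rwa [Nat.card_Icc, Nat.add_sub_cancel] at this
  have h2 : ((P.filter (fun B => minOf B ≤ j)).biUnion id).card
      ≤ ∑ B ∈ P.filter (fun B => minOf B ≤ j), B.card := Finset.card_biUnion_le
  have h3 : ∑ B ∈ P.filter (fun B => minOf B ≤ j), B.card
      = 2 * (P.filter (fun B => minOf B ≤ j)).card := by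
    rw [Finset.sum_congr rfl (fun B hB => hP.2.1 B (mem_of_mem_filter B hB)),
      Finset.sum_const, smul_eq_mul]
    ring
  omega

end basic


open Finset

def tau (i x : ℕ) : ℕ := if x < i then x else x + 2
def rho (i x : ℕ) : ℕ := if x < i then x else x - 2

lemma tau_mono {i : ℕ} : StrictMono (tau i) := by
  intro x y h
  unfold tau
  split_ifs <;> omega

lemma tau_rho {i x : ℕ} (h : x < i ∨ i + 2 ≤ x) : tau i (rho i x) = x := by
  unfold tau rho
  split_ifs <;> omega

/-- the maximal opener and its successor form a block -/
lemma maxblock {k u0 : ℕ} {P : Finset (Finset ℕ)} (hP : IsNCP k P)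
    (hiO : u0 ∈ P.image minOf) (hmax0 : ∀ y ∈ P.image minOf, y ≤ u0) :
    {u0, u0 + 1} ∈ P := by
  obtain ⟨B, hB, hmin⟩ : ∃ B ∈ P, minOf B = u0 := by
    rw [mem_image] at hiO
    exact hiO
  obtain ⟨u, v, huv, hBuv, humin⟩ := pair_struct (hP.2.1 B hB)
  have hui : u = u0 := by rw [← humin, hmin]
  have hmax : ∀ y ∈ P.image minOf, y ≤ u := fun y hy => hui ▸ hmax0 y hy
  rw [← hui]
  by_cases hv : v = u + 1
  · rw [← hv, ← hBuv]; exact hB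
  · exfalso
    have hvlt : u + 1 < v := by omega
    have hvB : v ∈ B := by rw [hBuv]; simp
    have hv2k : v ≤ 2*k := by
      have := hP.1.2.1 B hB hvB
      simp only [mem_Icc] at this
      exact this.2
    obtain ⟨C, hC, hu1C⟩ := hP.1.2.2.2 (u+1) (by simp only [mem_Icc]; omega)
    have hCneB : C ≠ B := by
      intro h
      rw [h, hBuv] at hu1C
      simp only [mem_insert, mem_singleton] at hu1C
      omega
    have hminC_le : minOf C ≤ u := hmax (minOf C) (mem_image.mpr ⟨C, hC, rfl⟩)
    have hminC_ne : minOf C ≠ u := by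
      intro h
      apply hCneB
      apply minOf_injOn hP hC hB
      rw [h, humin]
    have hminC_lt : minOf C < u := by omega
    apply hP.2.2
    refine ⟨minOf C, u, u+1, v, hminC_lt, by omega, hvlt, C, hC, B, hB, hCneB,
      minOf_mem (hP.1.1 C hC), hu1C, ?_, ?_⟩
    · rw [hBuv]; simp
    · rw [hBuv]; simp

lemma rho_tau' {i x : ℕ} : rho i (tau i x) = x := by
  unfold tau rho
  split_ifs <;> omega

section down
variable {k i : ℕ} {P : Finset (Finset ℕ)}

lemma hdom (hP : IsNCP k P) (hD : {i, i+1} ∈ P) :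
    ∀ B ∈ P.erase {i, i+1}, ∀ x ∈ B, 1 ≤ x ∧ x ≤ 2*k ∧ (x < i ∨ i + 2 ≤ x) := by
  intro B hB x hx
  have hBP : B ∈ P := mem_of_mem_erase hB
  have hBne : B ≠ {i, i+1} := ne_of_mem_erase hB
  have hIcc := hP.1.2.1 B hBP hx
  simp only [mem_Icc] at hIcc
  have hdisj := hP.1.2.2.1 B hBP _ hD hBne
  have hxD : x ∉ ({i, i+1} : Finset ℕ) := fun hxD => disjoint_left.mp hdisj hx hxD
  simp only [mem_insert, mem_singleton] at hxD
  push_neg at hxD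
  omega

lemma blockid (hP : IsNCP k P) (hD : {i, i+1} ∈ P) {B : Finset ℕ}
    (hB : B ∈ P.erase {i, i+1}) : (B.image (rho i)).image (tau i) = B := by
  rw [Finset.image_image]
  have : B.image (tau i ∘ rho i) = B.image id := by
    apply Finset.image_congr
    intro x hx
    have h := hdom hP hD B hB x hx
    exact tau_rho (by omega)
  rw [this, Finset.image_id]

lemma rho_injOn (hP : IsNCP k P) (hD : {i, i+1} ∈ P) {B : Finset ℕ}
    (hB : B ∈ P.erase {i, i+1}) {x y : ℕ} (hx : x ∈ B) (hy : y ∈ B)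
    (h : rho i x = rho i y) : x = y := by
  have h1 := hdom hP hD B hB x hx
  have h2 := hdom hP hD B hB y hy
  have := congrArg (tau i) h
  rwa [tau_rho (by omega), tau_rho (by omega)] at this

lemma minOf_image_rho (hP : IsNCP k P) (hD : {i, i+1} ∈ P) {B : Finset ℕ}
    (hB : B ∈ P.erase {i, i+1}) : minOf (B.image (rho i)) = rho i (minOf B) := by
  have hBP : B ∈ P := mem_of_mem_erase hB
  have hBne : B.Nonempty := hP.1.1 B hBP
  have hm : minOf B ∈ B := minOf_mem hBne
  apply minOf_eq_of
  · exact mem_image_of_mem _ hm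
  · intro y hy
    rw [mem_image] at hy
    obtain ⟨x, hx, rfl⟩ := hy
    have h1 := hdom hP hD B hB x hx
    have h2 := hdom hP hD B hB (minOf B) hm
    have h3 := minOf_le hx
    unfold rho
    split_ifs <;> omega

lemma minOf_pair : minOf {i, i+1} = i :=
  minOf_eq_of (by simp) (by intro x hx; simp only [mem_insert, mem_singleton] at hx; omega)

lemma down_isNCP (hP : IsNCP k P) (hk : 1 ≤ k) (hD : {i, i+1} ∈ P) (hi1 : 1 ≤ i)
    (hi2 : i + 1 ≤ 2*k) :
    IsNCP (k-1) ((P.erase {i, i+1}).image (fun B => B.image (rho i))) := by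
  set D : Finset ℕ := {i, i+1} with hDdef
  refine ⟨⟨?_, ?_, ?_, ?_⟩, ?_, ?_⟩
  · -- nonempty
    intro B' hB'
    rw [mem_image] at hB'
    obtain ⟨B, hB, rfl⟩ := hB'
    exact (hP.1.1 B (mem_of_mem_erase hB)).image _
  · -- subset
    intro B' hB' y hy
    rw [mem_image] at hB'
    obtain ⟨B, hB, rfl⟩ := hB'
    rw [mem_image] at hy
    obtain ⟨x, hx, rfl⟩ := hy
    have h := hdom hP hD B hB x hx
    simp only [mem_Icc]
    unfold rho
    split_ifs <;> omega
  · -- disjoint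
    intro B' hB' C' hC' hne
    rw [mem_image] at hB' hC'
    obtain ⟨B, hB, rfl⟩ := hB'
    obtain ⟨C, hC, rfl⟩ := hC'
    have hBC : B ≠ C := by rintro rfl; exact hne rfl
    have hdisj := hP.1.2.2.1 B (mem_of_mem_erase hB) C (mem_of_mem_erase hC) hBC
    rw [disjoint_left]
    intro z hzB hzC
    rw [mem_image] at hzB hzC
    obtain ⟨x, hx, rfl⟩ := hzB
    obtain ⟨y, hy, hxy⟩ := hzC
    have h1 := hdom hP hD B hB x hx
    have h2 := hdom hP hD C hC y hy
    have : y = x := by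
      have := congrArg (tau i) hxy
      rwa [tau_rho (by omega), tau_rho (by omega)] at this
    rw [← this] at hx
    exact disjoint_left.mp hdisj hx hy
  · -- cover
    intro x hx
    simp only [mem_Icc] at hx
    have htx : tau i x ∈ Icc 1 (2*k) := by
      simp only [mem_Icc]
      unfold tau
      split_ifs <;> omega
    obtain ⟨B, hB, hxB⟩ := hP.1.2.2.2 _ htx
    have htne : tau i x ≠ i ∧ tau i x ≠ i + 1 := by
      unfold tau
      split_ifs <;> omega
    have hBne : B ≠ D := by
      rintro rfl
      simp only [hDdef, mem_insert, mem_singleton] at hxB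
      omega
    refine ⟨B.image (rho i), mem_image_of_mem _ (mem_erase.mpr ⟨hBne, hB⟩), ?_⟩
    rw [← rho_tau' (i := i) (x := x)]
    exact mem_image_of_mem _ hxB
  · -- pair
    intro B' hB'
    rw [mem_image] at hB'
    obtain ⟨B, hB, rfl⟩ := hB'
    rw [Finset.card_image_of_injOn, hP.2.1 B (mem_of_mem_erase hB)]
    intro x hx y hy h
    exact rho_injOn hP hD hB hx hy h
  · -- noncrossing
    rintro ⟨a, b, c, d, hab, hbc, hcd, B', hB', C', hC', hne, haB, hcB, hbC, hdC⟩
    rw [mem_image] at hB' hC'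
    obtain ⟨B, hB, rfl⟩ := hB'
    obtain ⟨C, hC, rfl⟩ := hC'
    rw [mem_image] at haB hcB hbC hdC
    obtain ⟨a0, ha0, rfl⟩ := haB
    obtain ⟨c0, hc0, rfl⟩ := hcB
    obtain ⟨b0, hb0, rfl⟩ := hbC
    obtain ⟨d0, hd0, rfl⟩ := hdC
    have hBC : B ≠ C := by rintro rfl; exact hne rfl
    have da := hdom hP hD B hB a0 ha0
    have dc := hdom hP hD B hB c0 hc0
    have db := hdom hP hD C hC b0 hb0
    have dd := hdom hP hD C hC d0 hd0
    apply hP.2.2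
    refine ⟨a0, b0, c0, d0, ?_, ?_, ?_, B, mem_of_mem_erase hB, C, mem_of_mem_erase hC,
      hBC, ha0, hc0, hb0, hd0⟩
    all_goals
      revert hab hbc hcd
      unfold rho
      split_ifs <;> omega

lemma down_theta (hP : IsNCP k P) (hD : {i, i+1} ∈ P) :
    ((P.erase {i, i+1}).image (fun B => B.image (rho i))).image minOf
      = ((P.image minOf).erase i).image (rho i) := by
  rw [Finset.image_image]
  have h1 : (P.erase {i, i+1}).image (minOf ∘ fun B => B.image (rho i))
      = (P.erase {i, i+1}).image (fun B => rho i (minOf B)) := by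
    apply Finset.image_congr
    intro B hB
    exact minOf_image_rho hP hD hB
  rw [h1]
  have h2 : (P.erase {i, i+1}).image minOf = (P.image minOf).erase i := by
    ext y
    simp only [mem_image, mem_erase]
    constructor
    · rintro ⟨B, hB, rfl⟩
      refine ⟨?_, B, hB.2, rfl⟩
      intro h
      apply hB.1
      apply minOf_injOn hP hB.2 hD
      rw [h, minOf_pair]
    · rintro ⟨hne, B, hB, rfl⟩
      refine ⟨B, ⟨?_, hB⟩, rfl⟩
      rintro rfl
      exact hne minOf_pair
  rw [← h2, Finset.image_image]
  rfl

lemma down_recover (hP : IsNCP k P) (hD : {i, i+1} ∈ P) :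
    ((P.erase {i, i+1}).image (fun B => B.image (rho i))).image (fun B => B.image (tau i))
      = P.erase {i, i+1} := by
  rw [Finset.image_image]
  have : (P.erase {i, i+1}).image ((fun B => B.image (tau i)) ∘ (fun B => B.image (rho i)))
      = (P.erase {i, i+1}).image id := by
    apply Finset.image_congr
    intro B hB
    exact blockid hP hD hB
  rw [this, Finset.image_id]

end down

lemma ncp_zero {P : Finset (Finset ℕ)} (hP : IsNCP 0 P) : P = ∅ := by
  rw [Finset.eq_empty_iff_forall_notMem]
  intro B hB
  obtain ⟨x, hx⟩ := hP.1.1 B hB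
  have := hP.1.2.1 B hB hx
  simp only [mem_Icc] at this
  omega

theorem theta_inj : ∀ k : ℕ, ∀ P Q : Finset (Finset ℕ), IsNCP k P → IsNCP k Q →
    P.image minOf = Q.image minOf → P = Q := by
  intro k
  induction k using Nat.strong_induction_on with
  | _ k IH =>
    intro P Q hP hQ hPQ
    rcases Nat.eq_zero_or_pos k with rfl|hk
    · rw [ncp_zero hP, ncp_zero hQ]
    · have hneP : (P.image minOf).Nonempty := by
        rw [← card_pos, O_card hP]; omega
      set i := (P.image minOf).max' hneP with hidef
      have hiO : i ∈ P.image minOf := (P.image minOf).max'_mem hneP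
      have hmaxP : ∀ y ∈ P.image minOf, y ≤ i := fun y hy => (P.image minOf).le_max' y hy
      have hDP : {i, i+1} ∈ P := maxblock hP hiO hmaxP
      have hDQ : {i, i+1} ∈ Q := by
        apply maxblock hQ
        · rw [← hPQ]; exact hiO
        · rw [← hPQ]; exact hmaxP
      have hi1 : 1 ≤ i := by
        have := O_sub hP hiO
        simp only [mem_Icc] at this
        omega
      have hi2 : i + 1 ≤ 2*k := by
        have := hP.1.2.1 _ hDP (show i+1 ∈ ({i, i+1} : Finset ℕ) by simp)
        simp only [mem_Icc] at this
        omega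
      have hP1 := down_isNCP hP hk hDP hi1 hi2
      have hQ1 := down_isNCP hQ hk hDQ hi1 hi2
      have hth : ((P.erase {i, i+1}).image (fun B => B.image (rho i))).image minOf
          = ((Q.erase {i, i+1}).image (fun B => B.image (rho i))).image minOf := by
        rw [down_theta hP hDP, down_theta hQ hDQ, hPQ]
      have heq := IH (k-1) (by omega) _ _ hP1 hQ1 hth
      have herase : P.erase {i, i+1} = Q.erase {i, i+1} := by
        rw [← down_recover hP hDP, ← down_recover hQ hDQ, heq]
      rw [← Finset.insert_erase hDP, ← Finset.insert_erase hDQ, herase]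

section up
variable {k i : ℕ} {P' : Finset (Finset ℕ)}

lemma htau_mem (hi1 : 1 ≤ i) {x : ℕ} (hx : x ∈ Icc 1 (2*k)) :
    1 ≤ tau i x ∧ tau i x ≤ 2*k+2 ∧ tau i x ≠ i ∧ tau i x ≠ i+1 := by
  simp only [mem_Icc] at hx
  unfold tau
  split_ifs <;> omega

lemma tau_inj : Function.Injective (tau i) := tau_mono.injective

lemma minOf_image_tau {B : Finset ℕ} (hB : B.Nonempty) :
    minOf (B.image (tau i)) = tau i (minOf B) := by
  apply minOf_eq_of
  · exact mem_image_of_mem _ (minOf_mem hB)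
  · intro y hy
    rw [mem_image] at hy
    obtain ⟨x, hx, rfl⟩ := hy
    exact tau_mono.monotone (minOf_le hx)

lemma up_isNCP (hP' : IsNCP k P') (hi1 : 1 ≤ i) (hi2 : i + 1 ≤ 2*k + 2) :
    IsNCP (k+1) (insert {i, i+1} (P'.image (fun B => B.image (tau i)))) := by
  have h2k2 : 2*(k+1) = 2*k+2 := by ring
  refine ⟨⟨?_, ?_, ?_, ?_⟩, ?_, ?_⟩
  · intro B hB
    rw [mem_insert] at hB
    rcases hB with rfl|hB
    · exact ⟨i, by simp⟩
    · rw [mem_image] at hB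
      obtain ⟨B0, hB0, rfl⟩ := hB
      exact (hP'.1.1 B0 hB0).image _
  · intro B hB y hy
    rw [mem_insert] at hB
    simp only [mem_Icc, h2k2]
    rcases hB with rfl|hB
    · simp only [mem_insert, mem_singleton] at hy
      rcases hy with rfl|rfl <;> omega
    · rw [mem_image] at hB
      obtain ⟨B0, hB0, rfl⟩ := hB
      rw [mem_image] at hy
      obtain ⟨x, hx, rfl⟩ := hy
      have := htau_mem (k := k) hi1 (hP'.1.2.1 B0 hB0 hx)
      omega
  · intro B hB C hC hne
    rw [mem_insert] at hB hC
    have key : ∀ B0 ∈ P', Disjoint ({i, i+1} : Finset ℕ) (B0.image (tau i)) := by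
      intro B0 hB0
      rw [disjoint_left]
      intro a ha ha'
      rw [mem_image] at ha'
      obtain ⟨x, hx, rfl⟩ := ha'
      have := htau_mem (k := k) hi1 (hP'.1.2.1 B0 hB0 hx)
      simp only [mem_insert, mem_singleton] at ha
      omega
    rcases hB with rfl|hB <;> rcases hC with rfl|hC
    · exact absurd rfl hne
    · rw [mem_image] at hC
      obtain ⟨C0, hC0, rfl⟩ := hC
      exact key C0 hC0
    · rw [mem_image] at hB
      obtain ⟨B0, hB0, rfl⟩ := hB
      exact (key B0 hB0).symm
    · rw [mem_image] at hB hC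
      obtain ⟨B0, hB0, rfl⟩ := hB
      obtain ⟨C0, hC0, rfl⟩ := hC
      have hBC : B0 ≠ C0 := by rintro rfl; exact hne rfl
      exact (Finset.disjoint_image tau_inj).mpr (hP'.1.2.2.1 B0 hB0 C0 hC0 hBC)
  · intro x hx
    simp only [mem_Icc, h2k2] at hx
    by_cases hxi : x = i ∨ x = i + 1
    · refine ⟨{i, i+1}, mem_insert_self _ _, ?_⟩
      simp only [mem_insert, mem_singleton]
      exact hxi
    · push_neg at hxi
      have hrx : rho i x ∈ Icc 1 (2*k) := by
        simp only [mem_Icc]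
        unfold rho
        split_ifs <;> omega
      obtain ⟨B, hB, hxB⟩ := hP'.1.2.2.2 _ hrx
      refine ⟨B.image (tau i), mem_insert_of_mem (mem_image_of_mem _ hB), ?_⟩
      rw [← tau_rho (x := x) (i := i) (by omega)]
      exact mem_image_of_mem _ hxB
  · intro B hB
    rw [mem_insert] at hB
    rcases hB with rfl|hB
    · rw [Finset.card_pair (by omega)]
    · rw [mem_image] at hB
      obtain ⟨B0, hB0, rfl⟩ := hB
      rw [Finset.card_image_of_injective _ tau_inj]
      exact hP'.2.1 B0 hB0
  · rintro ⟨a, b, c, d, hab, hbc, hcd, B, hB, C, hC, hne, haB, hcB, hbC, hdC⟩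
    rw [mem_insert] at hB hC
    rcases hB with rfl|hB <;> rcases hC with rfl|hC
    · exact hne rfl
    · simp only [mem_insert, mem_singleton] at haB hcB
      omega
    · simp only [mem_insert, mem_singleton] at hbC hdC
      omega
    · rw [mem_image] at hB hC
      obtain ⟨B0, hB0, rfl⟩ := hB
      obtain ⟨C0, hC0, rfl⟩ := hC
      have hBC : B0 ≠ C0 := by rintro rfl; exact hne rfl
      rw [mem_image] at haB hcB hbC hdC
      obtain ⟨a0, ha0, rfl⟩ := haB
      obtain ⟨c0, hc0, rfl⟩ := hcB
      obtain ⟨b0, hb0, rfl⟩ := hbC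
      obtain ⟨d0, hd0, rfl⟩ := hdC
      apply hP'.2.2
      exact ⟨a0, b0, c0, d0, tau_mono.lt_iff_lt.mp hab, tau_mono.lt_iff_lt.mp hbc,
        tau_mono.lt_iff_lt.mp hcd, B0, hB0, C0, hC0, hBC, ha0, hc0, hb0, hd0⟩

lemma up_theta (hP' : IsNCP k P') :
    (insert {i, i+1} (P'.image (fun B => B.image (tau i)))).image minOf
      = insert i ((P'.image minOf).image (tau i)) := by
  rw [Finset.image_insert, minOf_pair]
  congr 1
  rw [Finset.image_image, Finset.image_image]
  apply Finset.image_congr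
  intro B hB
  exact minOf_image_tau (hP'.1.1 B hB)

end up

theorem theta_surj : ∀ k : ℕ, ∀ O : Finset ℕ, O ⊆ Icc 1 (2*k) → O.card = k →
    (∀ j, j ≤ 2*k → j ≤ 2 * cnt O j) → ∃ P, IsNCP k P ∧ P.image minOf = O := by
  intro k
  induction k using Nat.strong_induction_on with
  | _ k IH =>
    intro O hO hcard hb
    rcases Nat.eq_zero_or_pos k with rfl|hk
    · refine ⟨∅, ⟨⟨?_, ?_, ?_, ?_⟩, ?_, ?_⟩, ?_⟩
      · intro B hB; exact absurd hB (notMem_empty _)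
      · intro B hB; exact absurd hB (notMem_empty _)
      · intro B hB; exact absurd hB (notMem_empty _)
      · intro x hx; simp only [mem_Icc] at hx; omega
      · intro B hB; exact absurd hB (notMem_empty _)
      · rintro ⟨a, b, c, d, _, _, _, B, hB, _⟩
        exact absurd hB (notMem_empty _)
      · rw [Finset.image_empty]
        exact (Finset.card_eq_zero.mp hcard).symm
    · have hneO : O.Nonempty := by rw [← card_pos, hcard]; omega
      set i := O.max' hneO with hidef
      have hiO : i ∈ O := O.max'_mem hneO
      have hmax : ∀ x ∈ O, x ≤ i := fun x hx => O.le_max' x hx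
      have h2k : 2*k ∉ O := ballot_top hO hcard hb hk
      have hi2 : i + 1 ≤ 2*k := by
        have h1 := hO hiO
        simp only [mem_Icc] at h1
        have : i ≠ 2*k := fun h => h2k (h ▸ hiO)
        omega
      have hi1 : 1 ≤ i := by
        have := hO hiO
        simp only [mem_Icc] at this
        omega
      have hlt : ∀ x ∈ O.erase i, x < i := by
        intro x hx
        have h1 := hmax x (mem_of_mem_erase hx)
        have h2 := ne_of_mem_erase hx
        omega
      have hsub1 : O.erase i ⊆ Icc 1 (2*(k-1)) := by
        intro x hx
        have h1 := hlt x hx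
        have h2 := hO (mem_of_mem_erase hx)
        simp only [mem_Icc] at h2 ⊢
        omega
      have hcard1 : (O.erase i).card = k - 1 := by
        rw [Finset.card_erase_of_mem hiO, hcard]
      have hb1 : ∀ j, j ≤ 2*(k-1) → j ≤ 2 * cnt (O.erase i) j := by
        intro j hj
        by_cases hji : j < i
        · have : (O.erase i).filter (fun x => x ≤ j) = O.filter (fun x => x ≤ j) := by
            ext x
            simp only [mem_filter, mem_erase]
            constructor
            · rintro ⟨⟨_, hx⟩, hle⟩; exact ⟨hx, hle⟩
            · rintro ⟨hx, hle⟩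
              exact ⟨⟨by omega, hx⟩, hle⟩
          rw [cnt, this]
          exact hb j (by omega)
        · push_neg at hji
          have : cnt (O.erase i) j = k - 1 := by
            rw [cnt, filter_true_of_mem, hcard1]
            intro x hx
            have := hlt x hx
            omega
          omega
      obtain ⟨P1, hP1, hth1⟩ := IH (k-1) (by omega) (O.erase i) hsub1 hcard1 hb1
      have hk1 : k - 1 + 1 = k := by omega
      refine ⟨insert {i, i+1} (P1.image (fun B => B.image (tau i))), ?_, ?_⟩
      · have := up_isNCP hP1 hi1 (by omega)
        rwa [hk1] at this
      · rw [up_theta hP1, hth1]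
        have : (O.erase i).image (tau i) = O.erase i := by
          have h1 : (O.erase i).image (tau i) = (O.erase i).image id := by
            apply Finset.image_congr
            intro x hx
            have := hlt x hx
            unfold tau
            simp only [id_eq]
            split_ifs <;> omega
          rw [h1, Finset.image_id]
        rw [this, Finset.insert_erase hiO]

lemma mem_partitionsOf {m : ℕ} {P : Finset (Finset ℕ)} :
    P ∈ partitionsOf m ↔ IsPart m P := by
  unfold partitionsOf
  rw [mem_filter, mem_powerset]
  constructor
  · exact fun h => h.2
  · intro h
    refine ⟨?_, h⟩
    intro B hB
    rw [mem_powerset]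
    exact h.2.1 B hB

theorem part1_card (k r : ℕ) :
    ((partitionsOf (2*k)).filter (fun P => (∀ B ∈ P, B.card = 2) ∧ NonCrossing P ∧
      (P.filter (fun B => Even (minOf B))).card = r)).card
    = (ballotF' k r).card := by
  apply Finset.card_bij (fun P _ => P.image minOf)
  · intro P hP'
    rw [mem_filter, mem_partitionsOf] at hP'
    obtain ⟨hpart, hpair, hNC, hst⟩ := hP'
    have hP : IsNCP k P := ⟨hpart, hpair, hNC⟩
    rw [ballotF', mem_filter, mem_powerset]
    exact ⟨O_sub hP, O_card hP, O_ballot hP, (O_evens hP).trans hst⟩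
  · intro P hPm Q hQm h
    rw [mem_filter, mem_partitionsOf] at hPm hQm
    exact theta_inj k P Q ⟨hPm.1, hPm.2.1, hPm.2.2.1⟩ ⟨hQm.1, hQm.2.1, hQm.2.2.1⟩ h
  · intro O hO'
    rw [ballotF', mem_filter, mem_powerset] at hO'
    obtain ⟨hOsub, hOcard, hOb, hOst⟩ := hO'
    obtain ⟨P, hP, hth⟩ := theta_surj k O hOsub hOcard hOb
    refine ⟨P, ?_, hth⟩
    rw [mem_filter, mem_partitionsOf]
    refine ⟨hP.1, hP.2.1, hP.2.2, ?_⟩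
    rw [← O_evens hP, hth]
    exact hOst


end NCnar

namespace NCnar
open Finset

lemma goodF_count (n r : ℕ) (hr : 1 ≤ r) :
    (goodF n r).card + n.choose (r-1) * n.choose (r+1) = n.choose r * n.choose r := by
  unfold goodF
  exact good_count n r hr

lemma goodF_zero (n : ℕ) : (goodF n 0).card = 1 := by
  unfold goodF
  exact good_count_zero n

end NCnar


/-- the number of non-crossing pair-partitions of `{1,…,2k}` with exactly
`r` blocks whose smaller element is even equals `(1/(r+1))·C(k,r)·C(k−1,r)`. -/
theorem card_nonCrossing_pair_with_even_min_blocks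
    (k : ℕ) (hk : 1 ≤ k) (r : ℕ) (hr : r ≤ k - 1) :
    ((((partitionsOf (2 * k)).filter (fun P =>
        (∀ B ∈ P, B.card = 2) ∧ NonCrossing P ∧
          (P.filter (fun B => Even (minOf B))).card = r)).card : ℝ))
      = (1 / ((r : ℝ) + 1)) * (Nat.choose k r : ℝ) * (Nat.choose (k - 1) r : ℝ) := by

  rw [NCnar.part1_card k r, NCnar.ballot_eq_good k r hk]
  set n := k - 1 with hn
  rcases Nat.eq_zero_or_pos r with rfl|hr1
  · rw [NCnar.goodF_zero n]
    simp
  · have hrn : r ≤ n := hr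
    have hnat := NCnar.goodF_count n r hr1
    have hg : ((NCnar.goodF n r).card : ℝ)
        = (n.choose r : ℝ) * (n.choose r : ℝ)
          - (n.choose (r-1) : ℝ) * (n.choose (r+1) : ℝ) := by
      have := congrArg (Nat.cast : ℕ → ℝ) hnat
      push_cast at this
      linarith
    have e1 := Nat.choose_succ_right_eq n r
    have ce1 : (n.choose (r+1) : ℝ) * ((r:ℝ)+1) = (n.choose r : ℝ) * ((n:ℝ) - (r:ℝ)) := by
      have := congrArg (Nat.cast : ℕ → ℝ) e1
      push_cast [Nat.cast_sub hrn] at this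
      linarith
    have e2 : n.choose r * r = n.choose (r-1) * (n - (r-1)) := by
      have := Nat.choose_succ_right_eq n (r-1)
      rwa [show r-1+1 = r by omega] at this
    have ce2 : (n.choose r : ℝ) * (r:ℝ)
        = (n.choose (r-1) : ℝ) * ((n:ℝ) - ((r:ℝ) - 1)) := by
      have := congrArg (Nat.cast : ℕ → ℝ) e2
      push_cast [Nat.cast_sub (show r-1 ≤ n by omega), Nat.cast_sub hr1] at this
      linarith
    have e3 : (k.choose r : ℝ) = (n.choose (r-1) : ℝ) + (n.choose r : ℝ) := by
      have hk1 : n + 1 = k := by omega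
      have h := Nat.choose_succ_succ n (r-1)
      rw [Nat.succ_eq_add_one, Nat.succ_eq_add_one, show r-1+1 = r by omega, hk1] at h
      rw [h]
      push_cast
      ring
    have hrne : ((r:ℝ)+1) ≠ 0 := by positivity
    have key : ((r:ℝ)+1) * ((NCnar.goodF n r).card : ℝ)
        = (k.choose r : ℝ) * (n.choose r : ℝ) := by
      rw [hg, e3]
      linear_combination (-(n.choose (r-1) : ℝ)) * ce1 + (n.choose r : ℝ) * ce2
    have : ((NCnar.goodF n r).card : ℝ)
        = ((k.choose r : ℝ) * (n.choose r : ℝ)) / ((r:ℝ)+1) := by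
      rw [eq_div_iff hrne]
      linarith [key]
    rw [this]
    ring
end
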